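/- arXiv:1510.05355 — 3 statements merged into one kernel-verified Lean document; each statement's English description precedes it below -/
import Mathlib

section
/- Suppose d = gcd(q−1, k·e1 − e2) = 1. Then the map (a,b) ↦ c(a,b) from F_q × F_{q^k} to F_q^{q^k−1} is injective, and the multiset of Hamming weights {w_H(c(a,b)) : a ∈ F_q, b ∈ F_{q^k}} consists of: 0 with multiplicity 1; q^{k−1}(q−1) − 1 with multiplicity (q−1)(q^k−1); q^{k−1}(q−1) with multiplicity q^k−1; and q^k−1 with multiplicity q−1. In particular C is a three-weight code of length q^k−1 with q^{k+1} codewords and minimum distance q^{k−1}(q−1) − 1. -/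
open Finset

noncomputable section

attribute [local instance] Classical.propDecidable

variable (p : ℕ) {F E : Type*} [Field F] [Fintype F] [Field E] [Fintype E]
  [Algebra F E] [Algebra (ZMod p) F]

/-- The canonical additive character `χ(x) = ζ_p^{Tr_{q/p}(x)}` of `F`. -/
def chi (x : F) : ℂ :=
  Complex.exp (2 * (Real.pi : ℂ) * Complex.I *
    (((Algebra.trace (ZMod p) F) x).val : ℂ) / (p : ℂ))

/-- The Gauss sum `G(ψ, χ) = ∑_{x ∈ F^*} ψ(x) χ(x)` of a map `ψ : F → ℂ`. -/
def gaussF (ψ : F → ℂ) : ℂ := ∑ x : Fˣ, ψ (x : F) * chi p (x : F)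

/-- The exponential sum `T_{(e1,e2)}(a,b)`; here `x^{(q^k-1)/(q-1)}` is written as the
field norm of `x`. -/
def Tsum (e1 e2 : ℕ) (a : F) (b : E) : ℂ :=
  ∑ y : Fˣ, ∑ x : Eˣ,
    chi p ((y : F) * a * ((Algebra.norm F) (x : E)) ^ e1) *
    chi p ((Algebra.trace F E) ((algebraMap F E (y : F)) * b * (x : E) ^ e2))

/-- The `i`-th coordinate `a·γ^{((q^k-1)/(q-1))·e1·i} + Tr(b·γ^{e2·i})` of the codeword
`c(a,b)`; here `γ^{(q^k-1)/(q-1)}` is written as the field norm of `γ`. -/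
def coord (γ : Eˣ) (e1 e2 : ℕ) (a : F) (b : E) (i : ℕ) : F :=
  a * (Algebra.norm F) ((γ : E) ^ (e1 * i)) + (Algebra.trace F E) (b * (γ : E) ^ (e2 * i))

/-- The Hamming weight of the codeword `c(a,b)` of length `n`. -/
def wH (n : ℕ) (γ : Eˣ) (e1 e2 : ℕ) (a : F) (b : E) : ℕ :=
  ((Finset.range n).filter fun i => coord γ e1 e2 a b i ≠ 0).card


namespace Aux

lemma exists_frob (F E : Type*) [Field F] [Fintype F] [Field E] [Fintype E] [Algebra F E] :
    ∃ ψ : E ≃ₐ[F] E, ∀ x : E, ψ x = x ^ Fintype.card F := by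
  set p := ringChar F with hpdef
  haveI : CharP F p := ringChar.charP F
  obtain ⟨n, hp, hcard⟩ := FiniteField.card F p
  haveI : Fact p.Prime := ⟨hp⟩
  haveI : CharP E p := charP_of_injective_algebraMap (algebraMap F E).injective p
  haveI : ExpChar E p := ExpChar.prime hp
  let σ : E →+* E := iterateFrobenius E p n
  have hσ : ∀ x : E, σ x = x ^ Fintype.card F := fun x => by
    rw [hcard]; exact iterateFrobenius_def p n x
  let τ : E →ₐ[F] E :=
    { toRingHom := σ
      commutes' := fun c => by
        show σ (algebraMap F E c) = algebraMap F E c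
        rw [hσ, ← map_pow, FiniteField.pow_card] }
  have hbij : Function.Bijective τ :=
    (Finite.injective_iff_bijective).mp (τ.toRingHom.injective)
  exact ⟨AlgEquiv.ofBijective τ hbij, fun x => hσ x⟩

variable {F E : Type*} [Field F] [Fintype F] [Field E] [Fintype E] [Algebra F E]

lemma card_units_filter (P : E → Prop) :
    (univ.filter fun x : E => P x).card =
      (univ.filter fun x : Eˣ => P (x : E)).card + (if P 0 then 1 else 0) := by
  have h1 : (univ.filter fun x : Eˣ => P (x : E)).card
      = ((univ.filter fun x : E => P x).filter fun x => x ≠ 0).card := by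
    refine Finset.card_bij (fun x _ => (x : E)) ?_ ?_ ?_
    · intro x hx
      simp only [Finset.mem_filter] at hx ⊢
      exact ⟨⟨mem_univ _, hx.2⟩, Units.ne_zero x⟩
    · intro x _ y _ h
      exact Units.ext h
    · intro x hx
      simp only [Finset.mem_filter] at hx
      exact ⟨Units.mk0 x hx.2, Finset.mem_filter.mpr ⟨mem_univ _, hx.1.2⟩, rfl⟩
  have h2 := Finset.card_filter_add_card_filter_not
    (s := univ.filter fun x : E => P x) (p := fun x => x = 0)
  have h3 : ((univ.filter fun x : E => P x).filter fun x => x = 0).card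
      = if P 0 then 1 else 0 := by
    by_cases h : P 0
    · simp only [h, if_true]
      have : ((univ.filter fun x : E => P x).filter fun x => x = 0) = {0} := by
        ext x
        simp only [Finset.mem_filter, Finset.mem_singleton, mem_univ, true_and]
        constructor
        · exact fun hx => hx.2
        · rintro rfl; exact ⟨h, rfl⟩
      rw [this, Finset.card_singleton]
    · simp only [h, if_false]
      rw [Finset.card_eq_zero]
      ext x
      simp only [Finset.mem_filter, Finset.notMem_empty, iff_false, mem_univ, true_and]
      rintro ⟨hx, rfl⟩
      exact h hx
  have h4 : ((univ.filter fun x : E => P x).filter fun x => ¬ x = 0).card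
      = ((univ.filter fun x : E => P x).filter fun x => x ≠ 0).card := rfl
  omega

lemma norm_formula (q k : ℕ) (hq2 : 2 ≤ q) (hk : 0 < k)
    (hF : Fintype.card F = q) (hE : Fintype.card E = q ^ k) (x : E) :
    algebraMap F E (Algebra.norm F x) = x ^ (∑ j ∈ range k, q ^ j) := by
  classical
  obtain ⟨ψ, hψ⟩ := exists_frob F E
  -- ψ^j x = x^(q^j)
  have hpow : ∀ (j : ℕ) (y : E), (ψ ^ j) y = y ^ q ^ j := by
    intro j
    induction j with
    | zero => intro y; simp
    | succ j ih =>
      intro y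
      rw [pow_succ', AlgEquiv.mul_apply, hψ, hF, ih, ← pow_mul, mul_comm, pow_succ']
  have hcardG : Fintype.card (E ≃ₐ[F] E) = k := by
    rw [← Nat.card_eq_fintype_card, IsGalois.card_aut_eq_finrank]
    have h := Module.card_eq_pow_finrank (K := F) (V := E)
    rw [hF, hE] at h
    exact (Nat.pow_right_injective hq2 h.symm)
  have hψk : ψ ^ k = 1 := by
    ext y
    rw [hpow, ← hE, AlgEquiv.one_apply, FiniteField.pow_card]
  have horder : orderOf ψ = k := by
    have hdvd : orderOf ψ ∣ k := orderOf_dvd_of_pow_eq_one hψk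
    rcases lt_or_eq_of_le (Nat.le_of_dvd hk hdvd) with hlt | heq
    · exfalso
      set j := orderOf ψ with hj
      have hj0 : 0 < j := by
        have : IsOfFinOrder ψ := isOfFinOrder_of_finite ψ
        exact this.orderOf_pos
      -- every x satisfies x ^ (q^j) = x
      have hfix : ∀ y : E, y ^ q ^ j = y := fun y => by
        rw [← hpow, pow_orderOf_eq_one, AlgEquiv.one_apply]
      obtain ⟨g, hg⟩ := IsCyclic.exists_generator (α := Eˣ)
      have hog : orderOf g = q ^ k - 1 := by
        rw [orderOf_eq_card_of_forall_mem_zpowers hg, Nat.card_eq_fintype_card,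
          Fintype.card_units, hE]
      have h1 : g ^ q ^ j = g := Units.ext (by rw [Units.val_pow_eq_pow_val, hfix])
      have h2 : g ^ (q ^ j - 1) = 1 := by
        have hq1 : 1 ≤ q ^ j := Nat.one_le_pow _ _ (by omega)
        have := h1
        rw [show q ^ j = (q ^ j - 1) + 1 by omega, pow_succ] at this
        exact mul_right_cancel (by rw [this, one_mul])
      have h3 : q ^ k - 1 ∣ q ^ j - 1 := hog ▸ orderOf_dvd_of_pow_eq_one h2
      have hj1 : 0 < q ^ j - 1 := by
        have : 2 ≤ q ^ j := le_trans hq2 (Nat.le_self_pow (by omega) q)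
        omega
      have h4 : q ^ k - 1 ≤ q ^ j - 1 := Nat.le_of_dvd hj1 h3
      have h5 : q ^ k ≤ q ^ j := by
        have : 1 ≤ q ^ k := Nat.one_le_pow _ _ (by omega)
        omega
      exact absurd h5 (not_le_of_gt (Nat.pow_lt_pow_right hq2 hlt))
    · exact heq
  have himg : (Finset.range k).image (fun j => ψ ^ j) = Finset.univ := by
    apply Finset.eq_univ_of_card
    rw [Finset.card_image_of_injOn, Finset.card_range, hcardG]
    intro i hi j hj hij
    exact pow_injOn_Iio_orderOf (by simpa [horder] using Finset.mem_range.mp hi)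
      (by simpa [horder] using Finset.mem_range.mp hj) hij
  rw [Algebra.norm_eq_prod_automorphisms, ← himg, Finset.prod_image, ← Finset.prod_pow_eq_pow_sum]
  · exact Finset.prod_congr rfl fun j _ => hpow j x
  · intro i hi j hj hij
    exact pow_injOn_Iio_orderOf (by simpa [horder] using Finset.mem_range.mp hi)
      (by simpa [horder] using Finset.mem_range.mp hj) hij

lemma count_eq (γ : Eˣ) (hγ : ∀ x : Eˣ, x ∈ Subgroup.zpowers γ) (n : ℕ)
    (hn : Fintype.card Eˣ = n) (s : ℤ) (hs : Int.gcd s n = 1) (P : E → Prop) :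
    ((Finset.range n).filter fun i : ℕ => P ((γ ^ (s * (i : ℤ)) : Eˣ) : E)).card =
      (Finset.univ.filter fun x : Eˣ => P (x : E)).card := by
  classical
  have hord : orderOf γ = n := by
    rw [orderOf_eq_card_of_forall_mem_zpowers hγ, Nat.card_eq_fintype_card, hn]
  have hinj : ∀ i ∈ Finset.range n, ∀ j ∈ Finset.range n,
      γ ^ (s * (i : ℤ)) = γ ^ (s * (j : ℤ)) → i = j := by
    intro i hi j hj hij
    rw [Finset.mem_range] at hi hj
    have hdvd : ((orderOf γ : ℤ)) ∣ s * (i : ℤ) - s * (j : ℤ) := orderOf_dvd_sub_iff_zpow_eq_zpow.mpr hij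
    rw [hord, ← mul_sub] at hdvd
    have hcop : IsCoprime (n : ℤ) s := by
      rw [Int.isCoprime_iff_gcd_eq_one, Int.gcd_comm]; exact hs
    have hdvd2 : (n : ℤ) ∣ (i : ℤ) - j := hcop.dvd_of_dvd_mul_left hdvd
    have := Int.eq_zero_of_abs_lt_dvd hdvd2 (by
      rw [abs_lt]; constructor <;> [omega; omega])
    omega
  refine Finset.card_bij (fun i _ => γ ^ (s * (i : ℤ))) ?_ ?_ ?_
  · intro i hi
    simp only [Finset.mem_filter] at hi ⊢
    exact ⟨Finset.mem_univ _, hi.2⟩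
  · intro i hi j hj h
    exact hinj i (Finset.mem_filter.mp hi).1 j (Finset.mem_filter.mp hj).1 h
  · intro x hx
    have hsurj := Finset.surj_on_of_inj_on_of_card_le
      (s := Finset.range n) (t := (Finset.univ : Finset Eˣ))
      (fun i _ => γ ^ (s * (i : ℤ))) (fun i _ => Finset.mem_univ _)
      (fun i j hi hj h => hinj i hi j hj h)
      (by rw [Finset.card_range, Finset.card_univ, hn])
    obtain ⟨i, hi, hix⟩ := hsurj x (Finset.mem_univ x)
    refine ⟨i, Finset.mem_filter.mpr ⟨hi, ?_⟩, hix.symm⟩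
    have := (Finset.mem_filter.mp hx).2
    rw [hix] at this
    exact this

lemma trace_fiber (q k : ℕ) (hq2 : 2 ≤ q) (hk : 0 < k)
    (hF : Fintype.card F = q) (hE : Fintype.card E = q ^ k)
    (b : E) (hb : b ≠ 0) (c : F) :
    (Finset.univ.filter fun x : E => Algebra.trace F E (b * x) = c).card = q ^ (k - 1) := by
  classical
  have hlin : ∀ (d : F) (z : E),
      Algebra.trace F E (algebraMap F E d * z) = d * Algebra.trace F E z := fun d z => by
    rw [← Algebra.smul_def, map_smul, smul_eq_mul]
  have hsurj : ∀ d : F, ∃ x : E, Algebra.trace F E (b * x) = d := by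
    intro d
    obtain ⟨y, hy⟩ := Algebra.trace_surjective F E d
    exact ⟨b⁻¹ * y, by rw [← mul_assoc, mul_inv_cancel₀ hb, one_mul, hy]⟩
  have hcc : ∀ c' : F,
      (Finset.univ.filter fun x : E => Algebra.trace F E (b * x) = c).card =
      (Finset.univ.filter fun x : E => Algebra.trace F E (b * x) = c').card := by
    intro c'
    obtain ⟨t, ht⟩ := hsurj (c' - c)
    refine Finset.card_bij' (fun x _ => x + t) (fun y _ => y - t) ?_ ?_ ?_ ?_
    · intro x hx
      simp only [Finset.mem_filter] at hx ⊢
      refine ⟨Finset.mem_univ _, ?_⟩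
      rw [mul_add, map_add, hx.2, ht]; ring
    · intro y hy
      simp only [Finset.mem_filter] at hy ⊢
      refine ⟨Finset.mem_univ _, ?_⟩
      rw [mul_sub, map_sub, hy.2, ht]; ring
    · intro x _; ring
    · intro y _; ring
  have hsum : ∑ c' : F, (Finset.univ.filter fun x : E => Algebra.trace F E (b * x) = c').card
      = Fintype.card E := by
    rw [← Finset.card_univ]
    exact (Finset.card_eq_sum_card_fiberwise (fun x _ => Finset.mem_univ _)).symm
  have hconst : ∀ c' ∈ (Finset.univ : Finset F),
      (Finset.univ.filter fun x : E => Algebra.trace F E (b * x) = c').card =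
      (Finset.univ.filter fun x : E => Algebra.trace F E (b * x) = c).card :=
    fun c' _ => (hcc c').symm
  rw [Finset.sum_congr rfl hconst, Finset.sum_const, Finset.card_univ, hF, smul_eq_mul, hE] at hsum
  have hqpos : 0 < q := by omega
  have : q * q ^ (k - 1) = q ^ k := by
    rw [← pow_succ']; congr 1; omega
  rw [← this] at hsum
  exact Nat.eq_of_mul_eq_mul_left hqpos hsum


lemma hlin' (d : F) (z : E) :
    Algebra.trace F E (algebraMap F E d * z) = d * Algebra.trace F E z := by
  rw [← Algebra.smul_def, map_smul, smul_eq_mul]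

lemma coord_iff (q k : ℕ) (hq2 : 2 ≤ q) (hk : 0 < k)
    (hF : Fintype.card F = q) (hE : Fintype.card E = q ^ k)
    (γ : Eˣ) (e1 e2 : ℕ) (a : F) (b : E) (i : ℕ) :
    coord γ e1 e2 a b i = 0 ↔
      Algebra.trace F E
        (b * ((γ ^ (((e2 : ℤ) - (∑ j ∈ range k, q ^ j) * e1) * i) : Eˣ) : E)) = -a := by
  set m : ℕ := ∑ j ∈ range k, q ^ j with hm
  have hu : algebraMap F E (Algebra.norm F (γ : E)) = (γ : E) ^ m :=
    norm_formula q k hq2 hk hF hE (γ : E)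
  set u : F := Algebra.norm F (γ : E) with hudef
  have hu0 : u ≠ 0 := by
    intro h
    have : algebraMap F E u = 0 := by rw [h, map_zero]
    rw [hu] at this
    exact pow_ne_zero m (Units.ne_zero γ) this
  have hN : Algebra.norm F ((γ : E) ^ (e1 * i)) = u ^ (e1 * i) := map_pow _ _ _
  set v : F := u ^ (e1 * i) with hvdef
  have hv : v ≠ 0 := pow_ne_zero _ hu0
  -- the unit power
  have hw : ((γ ^ (((e2 : ℤ) - (m : ℤ) * e1) * i) : Eˣ) : E)
      = (γ : E) ^ (e2 * i) * ((γ : E) ^ (m * (e1 * i)))⁻¹ := by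
    have hexp : ((e2 : ℤ) - (m : ℤ) * e1) * i = ((e2 * i : ℕ) : ℤ) - ((m * (e1 * i) : ℕ) : ℤ) := by
      push_cast; ring
    rw [hexp, zpow_sub, zpow_natCast, zpow_natCast]
    simp [div_eq_mul_inv]
  have halg : algebraMap F E v⁻¹ = ((γ : E) ^ (m * (e1 * i)))⁻¹ := by
    rw [map_inv₀, hvdef, map_pow, hu, ← pow_mul]
  have hbw : b * ((γ ^ (((e2 : ℤ) - (m : ℤ) * e1) * i) : Eˣ) : E)
      = algebraMap F E v⁻¹ * (b * (γ : E) ^ (e2 * i)) := by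
    rw [hw, halg]; ring
  have htr : Algebra.trace F E
      (b * ((γ ^ (((e2 : ℤ) - (m : ℤ) * e1) * i) : Eˣ) : E))
      = v⁻¹ * Algebra.trace F E (b * (γ : E) ^ (e2 * i)) := by
    rw [hbw, hlin']
  rw [htr]
  show a * Algebra.norm F ((γ : E) ^ (e1 * i)) + Algebra.trace F E (b * (γ : E) ^ (e2 * i)) = 0
    ↔ _
  rw [hN]
  constructor
  · intro h
    field_simp
    linear_combination h
  · intro h
    field_simp at h
    linear_combination h


lemma geom_mul (q k : ℕ) (hq2 : 2 ≤ q) :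
    (q - 1) * (∑ j ∈ range k, q ^ j) = q ^ k - 1 := by
  have h1 : (1 : ℕ) ≤ q := by omega
  have h2 : (1 : ℕ) ≤ q ^ k := Nat.one_le_pow _ _ (by omega)
  have hz : ((q : ℤ) - 1) * (∑ j ∈ range k, (q : ℤ) ^ j) = (q : ℤ) ^ k - 1 := by
    rw [mul_comm]; exact geom_sum_mul (q : ℤ) k
  have : (((q - 1) * (∑ j ∈ range k, q ^ j) : ℕ) : ℤ) = (((q ^ k - 1 : ℕ)) : ℤ) := by
    push_cast [Nat.cast_sub h1, Nat.cast_sub h2]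
    exact hz
  exact_mod_cast this

lemma coprime_s (q k e1 e2 : ℕ) (hq2 : 2 ≤ q) (hk : 0 < k)
    (h1 : Nat.gcd ((q ^ k - 1) / (q - 1)) e2 = 1)
    (hd : Int.gcd ((q : ℤ) - 1) ((k : ℤ) * e1 - e2) = 1) :
    Int.gcd ((e2 : ℤ) - (∑ j ∈ range k, q ^ j) * e1) ((q ^ k - 1 : ℕ)) = 1 := by
  set m : ℕ := ∑ j ∈ range k, q ^ j with hm
  set s : ℤ := (e2 : ℤ) - (m : ℤ) * e1 with hs
  have hmul : (q - 1) * m = q ^ k - 1 := geom_mul q k hq2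
  have hdiv : (q ^ k - 1) / (q - 1) = m := by
    rw [← hmul, Nat.mul_div_cancel_left _ (by omega : 0 < q - 1)]
  rw [hdiv] at h1
  -- coprime with m
  have c1 : IsCoprime (m : ℤ) s := by
    have : IsCoprime (m : ℤ) (e2 : ℤ) := by
      rw [Int.isCoprime_iff_gcd_eq_one, Int.gcd_natCast_natCast]
      exact h1
    have h := this.add_mul_left_right (-(e1 : ℤ))
    have : (e2 : ℤ) + (m : ℤ) * (-(e1 : ℤ)) = s := by rw [hs]; ring
    rwa [this] at h
  -- coprime with q - 1
  have c2 : IsCoprime ((q : ℤ) - 1) s := by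
    have hd' : IsCoprime ((q : ℤ) - 1) ((e2 : ℤ) - (k : ℤ) * e1) := by
      have : IsCoprime ((q : ℤ) - 1) ((k : ℤ) * e1 - e2) :=
        Int.isCoprime_iff_gcd_eq_one.mpr hd
      have h := this.neg_right
      rwa [neg_sub] at h
    have hdvd : ((q : ℤ) - 1) ∣ (m : ℤ) - k := by
      have : (m : ℤ) - k = ∑ j ∈ range k, ((q : ℤ) ^ j - 1) := by
        rw [Finset.sum_sub_distrib, Finset.sum_const, Finset.card_range, hm]
        push_cast
        ring
      rw [this]
      refine Finset.dvd_sum fun j _ => ?_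
      have := sub_dvd_pow_sub_pow (q : ℤ) 1 j
      rwa [one_pow] at this
    obtain ⟨t, ht⟩ := hdvd
    have h := hd'.add_mul_left_right (-t * e1)
    have heq : (e2 : ℤ) - (k : ℤ) * e1 + ((q : ℤ) - 1) * (-t * e1) = s := by
      rw [hs]
      have : (m : ℤ) = (k : ℤ) + ((q : ℤ) - 1) * t := by omega
      rw [this]; ring
    rwa [heq] at h
  have c3 : IsCoprime (((q : ℤ) - 1) * m) s := c2.mul_left c1
  have hcast : (((q ^ k - 1 : ℕ)) : ℤ) = ((q : ℤ) - 1) * m := by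
    rw [← hmul]
    push_cast [Nat.cast_sub (by omega : (1:ℕ) ≤ q)]
    ring
  rw [← Int.isCoprime_iff_gcd_eq_one, hcast]
  exact c3.symm

lemma zcount (q k : ℕ) (hq2 : 2 ≤ q) (hk : 0 < k)
    (hF : Fintype.card F = q) (hE : Fintype.card E = q ^ k)
    (γ : Eˣ) (hγ : ∀ x : Eˣ, x ∈ Subgroup.zpowers γ)
    (e1 e2 : ℕ)
    (h1 : Nat.gcd ((q ^ k - 1) / (q - 1)) e2 = 1)
    (hd : Int.gcd ((q : ℤ) - 1) ((k : ℤ) * e1 - e2) = 1)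
    (a : F) (b : E) (hb : b ≠ 0) :
    ((Finset.range (q ^ k - 1)).filter fun i => coord γ e1 e2 a b i = 0).card
      = q ^ (k - 1) - (if a = 0 then 1 else 0) := by
  set m : ℕ := ∑ j ∈ range k, q ^ j with hm
  set s : ℤ := (e2 : ℤ) - (m : ℤ) * e1 with hs
  have hfc : ((Finset.range (q ^ k - 1)).filter fun i => coord γ e1 e2 a b i = 0)
      = ((Finset.range (q ^ k - 1)).filter fun i : ℕ =>
          (fun z : E => Algebra.trace F E (b * z) = -a) ((γ ^ (s * (i : ℤ)) : Eˣ) : E)) := by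
    apply Finset.filter_congr
    intro i _
    exact coord_iff q k hq2 hk hF hE γ e1 e2 a b i
  have hn : Fintype.card Eˣ = q ^ k - 1 := by
    rw [Fintype.card_units, hE]
  have hcnt := count_eq γ hγ (q ^ k - 1) hn s
    (coprime_s q k e1 e2 hq2 hk h1 hd)
    (fun z : E => Algebra.trace F E (b * z) = -a)
  rw [hfc, hcnt]
  have hcu := card_units_filter (E := E) (fun z : E => Algebra.trace F E (b * z) = -a)
  have hfib := trace_fiber q k hq2 hk hF hE b hb (-a)
  rw [hfib] at hcu
  have hP0 : (Algebra.trace F E (b * 0) = -a) ↔ a = 0 := by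
    rw [mul_zero, map_zero]
    constructor
    · intro h; have := h.symm; rwa [neg_eq_zero] at this
    · rintro rfl; rw [neg_zero]
  by_cases ha : a = 0
  · rw [if_pos (hP0.mpr ha)] at hcu
    rw [if_pos ha]
    omega
  · rw [if_neg (fun h => ha (hP0.mp h))] at hcu
    rw [if_neg ha]
    omega


lemma wH_eq (n : ℕ) (γ : Eˣ) (e1 e2 : ℕ) (a : F) (b : E) :
    wH n γ e1 e2 a b
      = n - ((Finset.range n).filter fun i => coord γ e1 e2 a b i = 0).card := by
  have h := Finset.card_filter_add_card_filter_not
    (s := Finset.range n) (p := fun i => coord γ e1 e2 a b i = 0)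
  have h2 : ((Finset.range n).filter fun i => ¬ coord γ e1 e2 a b i = 0).card
      = wH n γ e1 e2 a b := rfl
  rw [Finset.card_range] at h
  omega

lemma wH_00 (n : ℕ) (γ : Eˣ) (e1 e2 : ℕ) :
    wH n γ e1 e2 (0 : F) (0 : E) = 0 := by
  simp [wH, coord]

lemma wH_a0 (n : ℕ) (γ : Eˣ) (e1 e2 : ℕ) (a : F) (ha : a ≠ 0) :
    wH n γ e1 e2 a (0 : E) = n := by
  rw [show wH n γ e1 e2 a (0 : E)
      = ((Finset.range n).filter fun i => coord γ e1 e2 a (0:E) i ≠ 0).card from rfl]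
  rw [Finset.filter_true_of_mem, Finset.card_range]
  intro i _
  simp only [coord, zero_mul, map_zero, add_zero]
  intro hcon
  rcases mul_eq_zero.mp hcon with h | h
  · exact ha h
  · have : ((γ : E) ^ (e1 * i)) ≠ 0 := pow_ne_zero _ (Units.ne_zero γ)
    exact this ((Algebra.norm_eq_zero_iff).mp h)

lemma coord_sub (γ : Eˣ) (e1 e2 : ℕ) (a a' : F) (b b' : E) (i : ℕ) :
    coord γ e1 e2 (a - a') (b - b') i = coord γ e1 e2 a b i - coord γ e1 e2 a' b' i := by
  simp only [coord, sub_mul, map_sub]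
  ring

lemma coord_zero_self (γ : Eˣ) (e1 e2 : ℕ) (a : F) :
    coord γ e1 e2 a (0 : E) 0 = a := by
  simp [coord]

end Aux

open Aux in
theorem statement_3
    (p e k q : ℕ) (hp : p.Prime) (he : 0 < e) (hk : 2 ≤ k) (hq : q = p ^ e)
    (F E : Type*) [Field F] [Fintype F] [Field E] [Fintype E]
    [Algebra F E] [Algebra (ZMod p) F]
    (hF : Fintype.card F = q) (hE : Fintype.card E = q ^ k)
    (γ : Eˣ) (hγ : ∀ x : Eˣ, x ∈ Subgroup.zpowers γ)
    (e1 e2 : ℕ) (he1 : 0 < e1) (he2 : 0 < e2)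
    (h1 : Nat.gcd ((q ^ k - 1) / (q - 1)) e2 = 1)
    (h2 : Nat.gcd (q - 1) (Nat.gcd e1 e2) = 1)
    (hd : Int.gcd ((q : ℤ) - 1) ((k : ℤ) * e1 - e2) = 1) :
    Function.Injective
      (fun ab : F × E => fun i : Fin (q ^ k - 1) => coord γ e1 e2 ab.1 ab.2 (i : ℕ)) ∧
    Multiset.map (fun ab : F × E => wH (q ^ k - 1) γ e1 e2 ab.1 ab.2)
        (Finset.univ : Finset (F × E)).val =
      Multiset.replicate 1 0 +
      Multiset.replicate ((q - 1) * (q ^ k - 1)) (q ^ (k - 1) * (q - 1) - 1) +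
      Multiset.replicate (q ^ k - 1) (q ^ (k - 1) * (q - 1)) +
      Multiset.replicate (q - 1) (q ^ k - 1) := by
  have hq2 : 2 ≤ q := by
    rw [hq]
    calc 2 ≤ p := hp.two_le
    _ ≤ p ^ e := Nat.le_self_pow (by omega) p
  have hk0 : 0 < k := by omega
  have hAq : q ^ k = q ^ (k - 1) * q := by
    rw [← pow_succ]
    congr 1
    omega
  have hA2 : 2 ≤ q ^ (k - 1) := by
    calc 2 ≤ q := hq2
    _ = q ^ 1 := (pow_one q).symm
    _ ≤ q ^ (k - 1) := Nat.pow_le_pow_right (by omega) (by omega)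
  have hAsub : q ^ (k - 1) * (q - 1) = q ^ (k - 1) * q - q ^ (k - 1) := by
    rw [Nat.mul_sub, mul_one]
  have hAmul : 2 * q ^ (k - 1) ≤ q ^ (k - 1) * q := by
    rw [mul_comm 2 _]
    exact Nat.mul_le_mul_left _ hq2
  -- weights in the mixed cases
  have w0b : ∀ b : E, b ≠ 0 → wH (q ^ k - 1) γ e1 e2 (0 : F) b = q ^ (k - 1) * (q - 1) := by
    intro b hb
    rw [wH_eq, zcount q k hq2 hk0 hF hE γ hγ e1 e2 h1 hd 0 b hb, if_pos rfl]
    omega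
  have wab : ∀ (a : F) (b : E), a ≠ 0 → b ≠ 0 →
      wH (q ^ k - 1) γ e1 e2 a b = q ^ (k - 1) * (q - 1) - 1 := by
    intro a b ha hb
    rw [wH_eq, zcount q k hq2 hk0 hF hE γ hγ e1 e2 h1 hd a b hb, if_neg ha]
    omega
  constructor
  · -- injectivity
    intro ab1 ab2 h
    have hco : ∀ i, i < q ^ k - 1 →
        coord γ e1 e2 ab1.1 ab1.2 i = coord γ e1 e2 ab2.1 ab2.2 i := by
      intro i hi
      exact congrFun h ⟨i, hi⟩
    have hz : ∀ i, i < q ^ k - 1 → coord γ e1 e2 (ab1.1 - ab2.1) (ab1.2 - ab2.2) i = 0 := by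
      intro i hi
      rw [coord_sub, hco i hi, sub_self]
    have hb : ab1.2 - ab2.2 = 0 := by
      by_contra hb
      have hcard := zcount q k hq2 hk0 hF hE γ hγ e1 e2 h1 hd (ab1.1 - ab2.1) _ hb
      have hall : ((Finset.range (q ^ k - 1)).filter
          fun i => coord γ e1 e2 (ab1.1 - ab2.1) (ab1.2 - ab2.2) i = 0)
          = Finset.range (q ^ k - 1) := by
        apply Finset.filter_true_of_mem
        intro i hi
        exact hz i (Finset.mem_range.mp hi)
      rw [hall, Finset.card_range] at hcard
      have hite : (if ab1.1 - ab2.1 = 0 then 1 else 0) ≤ 1 := by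
        split <;> omega
      omega
    have ha : ab1.1 - ab2.1 = 0 := by
      have h0 := hz 0 (by omega)
      rw [hb, coord_zero_self] at h0
      exact h0
    have e1' : ab1.1 = ab2.1 := sub_eq_zero.mp ha
    have e2' : ab1.2 = ab2.2 := sub_eq_zero.mp hb
    exact Prod.ext e1' e2'
  · -- weight distribution
    set f : F × E → ℕ := fun ab => wH (q ^ k - 1) γ e1 e2 ab.1 ab.2 with hf
    set M : Multiset (F × E) := (Finset.univ : Finset (F × E)).val with hM
    set P1 : F × E → Prop := fun ab => ab.1 = 0 ∧ ab.2 = 0 with hP1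
    set P2 : F × E → Prop := fun ab => ¬ ab.1 = 0 ∧ ab.2 = 0 with hP2
    set P3 : F × E → Prop := fun ab => ab.1 = 0 ∧ ¬ ab.2 = 0 with hP3
    set P4 : F × E → Prop := fun ab => ¬ ab.1 = 0 ∧ ¬ ab.2 = 0 with hP4
    have hsplit : M = M.filter P1 + M.filter P2 + (M.filter P3 + M.filter P4) := by
      have h0 : M = M.filter (fun ab => ab.2 = 0) + M.filter (fun ab => ¬ ab.2 = 0) :=
        (Multiset.filter_add_not _ M).symm
      have ha : M.filter (fun ab => ab.2 = 0) = M.filter P1 + M.filter P2 := by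
        have := (Multiset.filter_add_not (fun ab : F × E => ab.1 = 0)
          (M.filter (fun ab => ab.2 = 0))).symm
        rwa [Multiset.filter_filter, Multiset.filter_filter] at this
      have hbq : M.filter (fun ab => ¬ ab.2 = 0) = M.filter P3 + M.filter P4 := by
        have := (Multiset.filter_add_not (fun ab : F × E => ab.1 = 0)
          (M.filter (fun ab => ¬ ab.2 = 0))).symm
        rwa [Multiset.filter_filter, Multiset.filter_filter] at this
      rw [← ha, ← hbq]
      exact h0
    -- cards of single-variable filters
    have hcF0 : (Finset.univ.filter fun a : F => a = 0) = ({0} : Finset F) := by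
      ext x; simp
    have hcE0 : (Finset.univ.filter fun b : E => b = 0) = ({0} : Finset E) := by
      ext x; simp
    have hcF1 : (Finset.univ.filter fun a : F => ¬ a = 0).card = q - 1 := by
      have : (Finset.univ.filter fun a : F => ¬ a = 0) = Finset.univ.erase 0 := by
        ext x; simp [Finset.mem_erase, and_comm]
      rw [this, Finset.card_erase_of_mem (Finset.mem_univ _), Finset.card_univ, hF]
    have hcE1 : (Finset.univ.filter fun b : E => ¬ b = 0).card = q ^ k - 1 := by
      have : (Finset.univ.filter fun b : E => ¬ b = 0) = Finset.univ.erase 0 := by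
        ext x; simp [Finset.mem_erase, and_comm]
      rw [this, Finset.card_erase_of_mem (Finset.mem_univ _), Finset.card_univ, hE]
    have hfv : ∀ (P : F × E → Prop) [DecidablePred P],
        Multiset.card (M.filter P) = (Finset.univ.filter P).card := by
      intro P _
      rw [hM, ← Finset.filter_val]
      rfl
    have hs1 : Finset.univ.filter P1 = {((0 : F), (0 : E))} := by
      ext ab
      simp [hP1, Prod.ext_iff]
    have hs2 : Finset.univ.filter P2
        = (Finset.univ.filter fun a : F => ¬ a = 0) ×ˢ ({0} : Finset E) := by
      ext ab
      simp only [Finset.mem_filter, Finset.mem_product, Finset.mem_univ, true_and, hP2,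
        Finset.mem_singleton]
    have hs3 : Finset.univ.filter P3
        = ({0} : Finset F) ×ˢ (Finset.univ.filter fun b : E => ¬ b = 0) := by
      ext ab
      simp only [Finset.mem_filter, Finset.mem_product, Finset.mem_univ, true_and, hP3,
        Finset.mem_singleton]
    have hs4 : Finset.univ.filter P4
        = (Finset.univ.filter fun a : F => ¬ a = 0)
          ×ˢ (Finset.univ.filter fun b : E => ¬ b = 0) := by
      ext ab
      simp only [Finset.mem_filter, Finset.mem_product, Finset.mem_univ, true_and, hP4,
        Finset.mem_singleton]
    have hcard1 : Multiset.card (M.filter P1) = 1 :=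
      (hfv P1).trans (by rw [hs1, Finset.card_singleton])
    have hcard2 : Multiset.card (M.filter P2) = q - 1 :=
      (hfv P2).trans (by rw [hs2, Finset.card_product, hcF1, Finset.card_singleton, mul_one])
    have hcard3 : Multiset.card (M.filter P3) = q ^ k - 1 :=
      (hfv P3).trans (by rw [hs3, Finset.card_product, hcE1, Finset.card_singleton, one_mul])
    have hcard4 : Multiset.card (M.filter P4) = (q - 1) * (q ^ k - 1) :=
      (hfv P4).trans (by rw [hs4, Finset.card_product, hcF1, hcE1])
    -- maps are replicates
    have hmap1 : Multiset.map f (M.filter P1) = Multiset.replicate 1 0 := by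
      rw [Multiset.eq_replicate]
      refine ⟨by rw [Multiset.card_map, hcard1], ?_⟩
      intro w hw
      obtain ⟨ab, hab, rfl⟩ := Multiset.mem_map.mp hw
      obtain ⟨ha, hb⟩ := Multiset.of_mem_filter hab
      show wH (q ^ k - 1) γ e1 e2 ab.1 ab.2 = 0
      rw [ha, hb, wH_00]
    have hmap2 : Multiset.map f (M.filter P2) = Multiset.replicate (q - 1) (q ^ k - 1) := by
      rw [Multiset.eq_replicate]
      refine ⟨by rw [Multiset.card_map, hcard2], ?_⟩
      intro w hw
      obtain ⟨ab, hab, rfl⟩ := Multiset.mem_map.mp hw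
      obtain ⟨ha, hb⟩ := Multiset.of_mem_filter hab
      show wH (q ^ k - 1) γ e1 e2 ab.1 ab.2 = q ^ k - 1
      rw [hb, wH_a0 (q ^ k - 1) γ e1 e2 ab.1 ha]
    have hmap3 : Multiset.map f (M.filter P3)
        = Multiset.replicate (q ^ k - 1) (q ^ (k - 1) * (q - 1)) := by
      rw [Multiset.eq_replicate]
      refine ⟨by rw [Multiset.card_map, hcard3], ?_⟩
      intro w hw
      obtain ⟨ab, hab, rfl⟩ := Multiset.mem_map.mp hw
      obtain ⟨ha, hb⟩ := Multiset.of_mem_filter hab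
      show wH (q ^ k - 1) γ e1 e2 ab.1 ab.2 = q ^ (k - 1) * (q - 1)
      rw [ha, w0b ab.2 hb]
    have hmap4 : Multiset.map f (M.filter P4)
        = Multiset.replicate ((q - 1) * (q ^ k - 1)) (q ^ (k - 1) * (q - 1) - 1) := by
      rw [Multiset.eq_replicate]
      refine ⟨by rw [Multiset.card_map, hcard4], ?_⟩
      intro w hw
      obtain ⟨ab, hab, rfl⟩ := Multiset.mem_map.mp hw
      obtain ⟨ha, hb⟩ := Multiset.of_mem_filter hab
      show wH (q ^ k - 1) γ e1 e2 ab.1 ab.2 = q ^ (k - 1) * (q - 1) - 1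
      rw [wab ab.1 ab.2 ha hb]
    calc Multiset.map f M
        = Multiset.map f (M.filter P1) + Multiset.map f (M.filter P2)
          + (Multiset.map f (M.filter P3) + Multiset.map f (M.filter P4)) := by
          rw [← Multiset.map_add, ← Multiset.map_add, ← Multiset.map_add, ← hsplit]
      _ = _ := by
          rw [hmap1, hmap2, hmap3, hmap4]
          abel
end
end

section
/- Suppose d = gcd(q−1, k·e1 − e2) = 1. Then C is a code of length q^k−1, with q^{k+1} codewords (dimension k+1 over F_q) and minimum distance h = q^{k−1}(q−1) − 1, and it meets the Griesmer bound with equality: ∑_{i=0}^{k} ⌈(q^{k−1}(q−1) − 1)/q^i⌉ = q^k − 1. -/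
open Finset

noncomputable section

attribute [local instance] Classical.propDecidable

variable (p : ℕ) {F E : Type*} [Field F] [Fintype F] [Field E] [Fintype E]
  [Algebra F E] [Algebra (ZMod p) F]

section AuxLemmas

private lemma aux_iter {P : ℕ → Prop} {m : ℕ} (hP : ∀ i, P (i + m) ↔ P i) :
    ∀ t i, P (i + t * m) ↔ P i := by
  intro t
  induction t with
  | zero => simp
  | succ t ih =>
    intro i
    have h : i + (t + 1) * m = (i + t * m) + m := by ring
    rw [h, hP, ih]

private lemma aux_mod {P : ℕ → Prop} {m : ℕ} (hP : ∀ i, P (i + m) ↔ P i)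
    (i : ℕ) : P (i % m) ↔ P i := by
  conv_rhs => rw [← Nat.mod_add_div i m]
  rw [Nat.mul_comm]
  exact (aux_iter hP (i / m) (i % m)).symm

private lemma aux_congr_mod {P : ℕ → Prop} {m : ℕ} (hP : ∀ i, P (i + m) ↔ P i)
    {x y : ℕ} (hxy : x % m = y % m) : P x ↔ P y := by
  rw [← aux_mod hP x, hxy, aux_mod hP y]

private lemma aux_count_periodic (P : ℕ → Prop) (m c : ℕ) (hm : 0 < m)
    (hP : ∀ i, P (i + m) ↔ P i) :
    ((range (c * m)).filter P).card = c * ((range m).filter P).card := by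
  rw [Finset.card_filter, Finset.card_filter]
  have key : ∑ i ∈ range (c * m), (if P i then 1 else 0)
      = ∑ x ∈ range c ×ˢ range m, (if P x.2 then 1 else 0) := by
    refine Finset.sum_nbij' (fun i => (i / m, i % m)) (fun x => x.1 * m + x.2) ?_ ?_ ?_ ?_ ?_
    · intro i hi
      simp only [Finset.mem_range, Finset.mem_product] at *
      exact ⟨(Nat.div_lt_iff_lt_mul hm).2 (by omega), Nat.mod_lt _ hm⟩
    · intro x hx
      simp only [Finset.mem_range, Finset.mem_product] at *
      have h1 : x.1 + 1 ≤ c := hx.1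
      have h2 : (x.1 + 1) * m ≤ c * m := Nat.mul_le_mul_right m h1
      have h3 : (x.1 + 1) * m = x.1 * m + m := by ring
      omega
    · intro i _
      show i / m * m + i % m = i
      rw [Nat.mul_comm]
      exact Nat.div_add_mod i m
    · intro x hx
      simp only [Finset.mem_range, Finset.mem_product] at hx
      have h1 : (x.1 * m + x.2) % m = x.2 := by
        rw [Nat.mul_comm, Nat.mul_add_mod]
        exact Nat.mod_eq_of_lt hx.2
      have h2 : (x.1 * m + x.2) / m = x.1 := by
        rw [Nat.mul_comm, Nat.mul_add_div hm]
        rw [Nat.div_eq_of_lt hx.2, Nat.add_zero]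
      exact Prod.ext h2 h1
    · intro i _
      exact if_congr (aux_mod hP i).symm rfl rfl
  rw [key, Finset.sum_product]
  have hconst : ∀ x : ℕ, (∑ y ∈ range m, if P (x, y).2 then 1 else 0)
      = ∑ y ∈ range m, if P y then 1 else 0 := fun x => rfl
  rw [Finset.sum_congr rfl fun x _ => hconst x, Finset.sum_const, Finset.card_range,
    smul_eq_mul]

private lemma aux_count_shift (P : ℕ → Prop) (n s : ℕ) (hn : 0 < n)
    (hP : ∀ i, P (i + n) ↔ P i) :
    ((range n).filter fun i => P (i + s)).card = ((range n).filter P).card := by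
  have hr : s % n < n := Nat.mod_lt _ hn
  have hs : s % n + n * (s / n) = s := Nat.mod_add_div s n
  have key : ∀ i : ℕ, (i + (n - s % n) + s) % n = i % n := by
    intro i
    have h1 : i + (n - s % n) + s = i + n * (s / n + 1) := by
      have h0 : n * (s / n + 1) = n * (s / n) + n := by ring
      omega
    rw [h1, Nat.add_mul_mod_self_left]
  refine Finset.card_nbij' (fun i => (i + s) % n) (fun j => (j + (n - s % n)) % n) ?_ ?_ ?_ ?_
  · intro i hi
    simp only [Finset.mem_filter, Finset.mem_range, Finset.mem_coe] at *
    exact ⟨Nat.mod_lt _ hn, (aux_mod hP _).2 hi.2⟩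
  · intro j hj
    simp only [Finset.mem_filter, Finset.mem_range, Finset.mem_coe] at *
    refine ⟨Nat.mod_lt _ hn, ?_⟩
    have h2 : ((j + (n - s % n)) % n + s) % n = j % n := by
      rw [Nat.mod_add_mod]
      exact key j
    exact (aux_congr_mod hP h2).2 hj.2
  · intro i hi
    simp only [Finset.mem_filter, Finset.mem_range, Finset.mem_coe] at hi
    show ((i + s) % n + (n - s % n)) % n = i
    rw [Nat.mod_add_mod]
    have h1 : (i + s + (n - s % n)) % n = i % n := by
      have h2 : i + s + (n - s % n) = i + (n - s % n) + s := by ring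
      rw [h2]; exact key i
    rw [h1, Nat.mod_eq_of_lt hi.1]
  · intro j hj
    simp only [Finset.mem_filter, Finset.mem_range, Finset.mem_coe] at hj
    show ((j + (n - s % n)) % n + s) % n = j
    rw [Nat.mod_add_mod, key j, Nat.mod_eq_of_lt hj.1]

private lemma aux_count_mul (P : ℕ → Prop) (m e : ℕ) (hm : 0 < m)
    (hcop : Nat.Coprime e m) (hP : ∀ i, P (i + m) ↔ P i) :
    ((range m).filter fun i => P (e * i)).card = ((range m).filter P).card := by
  rcases eq_or_lt_of_le (show 1 ≤ m from hm) with hm1 | hm1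
  · -- m = 1
    have hm1' : m = 1 := hm1.symm
    subst hm1'
    have h0 : ∀ Q : ℕ → Prop, (Finset.filter Q (range 1)).card = if Q 0 then 1 else 0 := by
      intro Q
      rw [Finset.range_one, Finset.filter_singleton]
      split <;> simp
    rw [h0, h0]
    simp only [Nat.mul_zero]
  · obtain ⟨c, -, hc⟩ := Nat.exists_mul_mod_eq_one_of_coprime hcop hm1
    have hmulmod : ∀ a b : ℕ, (a * (b % m)) % m = (a * b) % m := by
      intro a b
      conv_rhs => rw [Nat.mul_mod]
      rw [Nat.mul_mod, Nat.mod_mod_of_dvd _ dvd_rfl]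
    have key1 : ∀ j : ℕ, (e * (c * j % m)) % m = j % m := by
      intro j
      rw [hmulmod]
      have h1 : e * (c * j) = (e * c) * j := by ring
      rw [h1, Nat.mul_mod, hc, Nat.one_mul, Nat.mod_mod_of_dvd _ dvd_rfl]
    have key2 : ∀ i : ℕ, (c * (e * i % m)) % m = i % m := by
      intro i
      rw [hmulmod]
      have h1 : c * (e * i) = (e * c) * i := by ring
      rw [h1, Nat.mul_mod, hc, Nat.one_mul, Nat.mod_mod_of_dvd _ dvd_rfl]
    refine Finset.card_nbij' (fun i => (e * i) % m) (fun j => (c * j) % m) ?_ ?_ ?_ ?_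
    · intro i hi
      simp only [Finset.mem_filter, Finset.mem_range, Finset.mem_coe] at *
      exact ⟨Nat.mod_lt _ hm, (aux_mod hP _).2 hi.2⟩
    · intro j hj
      simp only [Finset.mem_filter, Finset.mem_range, Finset.mem_coe] at *
      refine ⟨Nat.mod_lt _ hm, ?_⟩
      exact (aux_congr_mod hP (key1 j)).2 hj.2
    · intro i hi
      simp only [Finset.mem_filter, Finset.mem_range, Finset.mem_coe] at hi
      show c * (e * i % m) % m = i
      rw [key2 i, Nat.mod_eq_of_lt hi.1]
    · intro j hj
      simp only [Finset.mem_filter, Finset.mem_range, Finset.mem_coe] at hj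
      show e * (c * j % m) % m = j
      rw [key1 j, Nat.mod_eq_of_lt hj.1]

private lemma aux_count_pow {G : Type*} [Group G] [Fintype G] (γ : G)
    (hγ : ∀ x : G, x ∈ Subgroup.zpowers γ) (P : G → Prop) :
    ((range (Fintype.card G)).filter fun i => P (γ ^ i)).card
      = (Finset.univ.filter P).card := by
  classical
  have ho : orderOf γ = Fintype.card G := by
    rw [orderOf_eq_card_of_forall_mem_zpowers hγ, Nat.card_eq_fintype_card]
  refine Finset.card_bij (fun i _ => γ ^ i) ?_ ?_ ?_
  · intro i hi
    rw [Finset.mem_filter] at hi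
    exact Finset.mem_filter.mpr ⟨Finset.mem_univ _, hi.2⟩
  · intro i hi j hj hij
    simp only [Finset.mem_filter, Finset.mem_range] at hi hj
    exact pow_injOn_Iio_orderOf (by simpa [ho] using hi.1) (by simpa [ho] using hj.1) hij
  · intro x hx
    rw [Finset.mem_filter] at hx
    have hmem : x ∈ Subgroup.zpowers γ := hγ x
    rw [mem_zpowers_iff_mem_range_orderOf] at hmem
    obtain ⟨i, hi, hix⟩ := Finset.mem_image.mp hmem
    rw [Finset.mem_range, ho] at hi
    refine ⟨i, ?_, hix⟩
    exact Finset.mem_filter.mpr ⟨Finset.mem_range.mpr hi, by rw [hix]; exact hx.2⟩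

private lemma aux_geom (q : ℕ) (hq : 1 ≤ q) (k : ℕ) :
    (q - 1) * (∑ i ∈ Finset.range k, q ^ i) + 1 = q ^ k := by
  have : ((q : ℤ) - 1) * (∑ i ∈ Finset.range k, (q : ℤ) ^ i) + 1 = (q : ℤ) ^ k := by
    induction k with
    | zero => simp
    | succ k ih =>
      rw [Finset.sum_range_succ]
      ring_nf
      ring_nf at ih
      linear_combination ih
  have h2 : ((q - 1 : ℕ) : ℤ) = (q : ℤ) - 1 := by
    push_cast [Nat.cast_sub hq]; ring
  exact_mod_cast (by push_cast [h2]; exact_mod_cast this :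
    (((q - 1) * (∑ i ∈ Finset.range k, q ^ i) + 1 : ℕ) : ℤ) = ((q ^ k : ℕ) : ℤ))

private lemma aux_ceil (a b : ℕ) (hb : 0 < b) :
    ⌈(a : ℚ) / (b : ℚ)⌉ = (((a + b - 1) / b : ℕ) : ℤ) := by
  have hbq : (0 : ℚ) < (b : ℚ) := by exact_mod_cast hb
  set z : ℕ := (a + b - 1) / b with hz
  have hd := Nat.div_add_mod (a + b - 1) b
  have hr : (a + b - 1) % b < b := Nat.mod_lt _ hb
  have h1 : a ≤ z * b := by
    have : b * z + (a + b - 1) % b = a + b - 1 := hd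
    have hzb : z * b = b * z := Nat.mul_comm z b
    omega
  have h2 : z * b < a + b := by
    have : b * z + (a + b - 1) % b = a + b - 1 := hd
    have hzb : z * b = b * z := Nat.mul_comm z b
    omega
  rw [Int.ceil_eq_iff]
  constructor
  · rw [lt_div_iff₀ hbq]
    have h2' : (z : ℚ) * b < a + b := by exact_mod_cast h2
    push_cast
    linarith
  · rw [div_le_iff₀ hbq]
    have h1' : (a : ℚ) ≤ z * b := by exact_mod_cast h1
    push_cast
    linarith

private lemma aux_count_tr (q k : ℕ) (hq2 : 2 ≤ q)
    (F E : Type*) [Field F] [Fintype F] [Field E] [Fintype E] [Algebra F E]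
    (hF : Fintype.card F = q) (hE : Fintype.card E = q ^ k)
    (b : E) (hb : b ≠ 0) :
    (Finset.univ.filter fun x : Eˣ => Algebra.trace F E (b * (x : E)) = 0).card
      = q ^ (k - 1) - 1 := by
  have hrank : Module.finrank F E = k := by
    have h1 : Fintype.card E = Fintype.card F ^ Module.finrank F E := Module.card_eq_pow_finrank
    rw [hE, hF] at h1
    exact (Nat.pow_right_injective hq2 h1.symm)
  have hk1 : 1 ≤ k := by
    by_contra h
    have : k = 0 := by omega
    rw [this] at hrank
    have := Module.finrank_pos (R := F) (M := E)
    omega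
  set ℓ : E →ₗ[F] E →ₗ[F] F := 0 with hℓdummy
  clear hℓdummy ℓ
  let L : E →ₗ[F] F := (Algebra.trace F E).comp (LinearMap.mulLeft F b)
  have hLapp : ∀ x : E, L x = Algebra.trace F E (b * x) := by
    intro x; simp [L, LinearMap.mulLeft_apply]
  have hsurj : Function.Surjective L := by
    intro y
    obtain ⟨z, hz⟩ := Algebra.trace_surjective F E y
    exact ⟨b⁻¹ * z, by rw [hLapp, ← mul_assoc, mul_inv_cancel₀ hb, one_mul, hz]⟩
  have hkerrank : Module.finrank F (LinearMap.ker L) = k - 1 := by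
    have h1 := LinearMap.finrank_range_add_finrank_ker L
    rw [LinearMap.range_eq_top.mpr hsurj] at h1
    rw [finrank_top, Module.finrank_self, hrank] at h1
    omega
  have hkercard : Fintype.card (LinearMap.ker L) = q ^ (k - 1) := by
    have h1 : Fintype.card (LinearMap.ker L) = Fintype.card F ^ Module.finrank F (LinearMap.ker L) :=
      Module.card_eq_pow_finrank
    rw [hF, hkerrank] at h1
    exact h1
  set S : Finset E := Finset.univ.filter (fun x => Algebra.trace F E (b * x) = 0) with hS
  have h0S : (0 : E) ∈ S := by
    rw [hS, Finset.mem_filter]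
    exact ⟨Finset.mem_univ _, by rw [mul_zero, map_zero]⟩
  have hScard : S.card = q ^ (k - 1) := by
    have hiff : ∀ x : E, x ∈ LinearMap.ker L ↔ Algebra.trace F E (b * x) = 0 := by
      intro x; rw [LinearMap.mem_ker, hLapp]
    have h2 : Fintype.card {x : E // Algebra.trace F E (b * x) = 0} = q ^ (k - 1) := by
      rw [Fintype.card_congr (Equiv.subtypeEquivRight hiff)] at hkercard
      exact hkercard
    rw [hS, ← Fintype.card_subtype]
    exact h2
  have hbij : (Finset.univ.filter fun x : Eˣ => Algebra.trace F E (b * (x : E)) = 0).card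
      = (S.erase 0).card := by
    refine Finset.card_bij (fun x _ => (x : E)) ?_ ?_ ?_
    · intro x hx
      rw [Finset.mem_filter] at hx
      exact Finset.mem_erase.mpr ⟨x.ne_zero, Finset.mem_filter.mpr ⟨Finset.mem_univ _, hx.2⟩⟩
    · intro x _ y _ hxy
      exact Units.ext hxy
    · intro y hy
      rw [Finset.mem_erase, hS, Finset.mem_filter] at hy
      refine ⟨Units.mk0 y hy.1, ?_, rfl⟩
      exact Finset.mem_filter.mpr ⟨Finset.mem_univ _, by simpa using hy.2.2⟩
  rw [hbij, Finset.card_erase_of_mem h0S, hScard]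

private lemma aux_units_image (q : ℕ) (F E : Type*) [Field F] [Fintype F] [Field E]
    [Fintype E] [Algebra F E] (hF : Fintype.card F = q) (x0 : E) (hx0 : x0 ^ (q - 1) = 1) :
    ∃ uu : Fˣ, algebraMap F E (uu : F) = x0 := by
  classical
  have hq2 : 2 ≤ q := by
    have := Fintype.one_lt_card (α := F)
    omega
  set f : Fˣ → E := fun y => algebraMap F E (y : F) with hf
  have hfinj : Function.Injective f := by
    intro y z h
    exact Units.ext ((algebraMap F E).injective h)
  set S : Finset E := Finset.univ.image f with hS
  have hcardS : S.card = q - 1 := by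
    rw [hS, Finset.card_image_of_injective _ hfinj, Finset.card_univ, Fintype.card_units, hF]
  have hroot : ∀ z ∈ S, z ^ (q - 1) = 1 := by
    intro z hz
    rw [hS, Finset.mem_image] at hz
    obtain ⟨y, _, rfl⟩ := hz
    have h1 : ((y : F)) ^ (q - 1) = 1 := by
      rw [← hF]
      exact FiniteField.pow_card_sub_one_eq_one (y : F) y.ne_zero
    show (algebraMap F E (y : F)) ^ (q - 1) = 1
    rw [← map_pow, h1, map_one]
  by_contra hcon
  push_neg at hcon
  have hx0S : x0 ∉ S := by
    intro hmem
    rw [hS, Finset.mem_image] at hmem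
    obtain ⟨y, _, hy⟩ := hmem
    exact hcon y hy
  set P : Polynomial E := Polynomial.X ^ (q - 1) - Polynomial.C 1 with hPdef
  have hP0 : P ≠ 0 := Polynomial.X_pow_sub_C_ne_zero (by omega) 1
  have hsub : insert x0 S ⊆ P.roots.toFinset := by
    intro z hz
    rw [Multiset.mem_toFinset, Polynomial.mem_roots']
    rw [Finset.mem_insert] at hz
    have hz1 : z ^ (q - 1) = 1 := by
      rcases hz with rfl | hz
      · exact hx0
      · exact hroot z hz
    exact ⟨hP0, by simp [Polynomial.IsRoot, hPdef, hz1]⟩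
  have hcard : (insert x0 S).card = q := by
    rw [Finset.card_insert_of_notMem hx0S, hcardS]; omega
  have h1 : (insert x0 S).card ≤ P.roots.toFinset.card := Finset.card_le_card hsub
  have h2 : P.roots.toFinset.card ≤ Multiset.card P.roots := Multiset.toFinset_card_le _
  have h3 : Multiset.card P.roots ≤ P.natDegree := Polynomial.card_roots' P
  have h4 : P.natDegree = q - 1 := Polynomial.natDegree_X_pow_sub_C
  omega

end AuxLemmas

theorem statement_4
    (p e k q : ℕ) (hp : p.Prime) (he : 0 < e) (hk : 2 ≤ k) (hq : q = p ^ e)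
    (F E : Type*) [Field F] [Fintype F] [Field E] [Fintype E]
    [Algebra F E] [Algebra (ZMod p) F]
    (hF : Fintype.card F = q) (hE : Fintype.card E = q ^ k)
    (γ : Eˣ) (hγ : ∀ x : Eˣ, x ∈ Subgroup.zpowers γ)
    (e1 e2 : ℕ) (he1 : 0 < e1) (he2 : 0 < e2)
    (h1 : Nat.gcd ((q ^ k - 1) / (q - 1)) e2 = 1)
    (h2 : Nat.gcd (q - 1) (Nat.gcd e1 e2) = 1)
    (hd : Int.gcd ((q : ℤ) - 1) ((k : ℤ) * e1 - e2) = 1) :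
    -- the code has `q^(k+1)` codewords (dimension `k+1` over `F_q`)
    Nat.card (Set.range
        (fun ab : F × E => fun i : Fin (q ^ k - 1) => coord γ e1 e2 ab.1 ab.2 (i : ℕ)))
      = q ^ (k + 1) ∧
    -- the minimum distance is `q^(k-1)(q-1) - 1`
    IsLeast {w : ℕ | ∃ a : F, ∃ b : E, ¬(a = 0 ∧ b = 0) ∧ wH (q ^ k - 1) γ e1 e2 a b = w}
      (q ^ (k - 1) * (q - 1) - 1) ∧
    -- the Griesmer bound is met with equality
    (∑ i ∈ Finset.range (k + 1), ⌈((q ^ (k - 1) * (q - 1) - 1 : ℕ) : ℚ) / (q : ℚ) ^ i⌉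
      = (q : ℤ) ^ k - 1) := by
  -- basic numerology
  have hq2 : 2 ≤ q := by
    rw [hq]
    calc 2 ≤ p := hp.two_le
    _ ≤ p ^ e := Nat.le_self_pow (by omega) p
  have hQ2 : 2 ≤ q ^ (k - 1) := le_trans hq2 (Nat.le_self_pow (by omega) q)
  have hQq : q ^ (k - 1) * q = q ^ k := by
    rw [← pow_succ]
    congr 1
    omega
  have hqk4 : 4 ≤ q ^ k := by
    have := Nat.mul_le_mul hQ2 hq2
    omega
  have hQlt : 2 * q ^ (k - 1) ≤ q ^ k := by
    have h' := Nat.mul_le_mul_left (q ^ (k - 1)) hq2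
    omega
  set n := q ^ k - 1 with hn_def
  have hn1 : n + 1 = q ^ k := by omega
  have hnpos : 0 < n := by omega
  set m := ∑ i ∈ Finset.range k, q ^ i with hm_def
  have hgeom : (q - 1) * m + 1 = q ^ k := aux_geom q (by omega) k
  have hmpos : 0 < m := by
    rcases Nat.eq_zero_or_pos m with h | h
    · rw [h, Nat.mul_zero] at hgeom; omega
    · exact h
  have hmn2 : (q - 1) * m = n := by omega
  have hm_eq : (q ^ k - 1) / (q - 1) = m := by
    rw [← hn_def, ← hmn2, Nat.mul_div_cancel_left m (by omega : 0 < q - 1)]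
  have hcop : Nat.Coprime e2 m := by
    rw [hm_eq] at h1
    exact Nat.Coprime.symm h1
  -- group-theoretic setup
  have hcardEx : Fintype.card Eˣ = n := by rw [Fintype.card_units, hE]
  have horder : orderOf γ = n := by
    rw [orderOf_eq_card_of_forall_mem_zpowers hγ, Nat.card_eq_fintype_card, hcardEx]
  have hγn : (γ : E) ^ n = 1 := by
    have h0 : γ ^ n = 1 := by rw [← horder]; exact pow_orderOf_eq_one γ
    calc (γ : E) ^ n = ((γ ^ n : Eˣ) : E) := by rw [Units.val_pow_eq_pow_val]
    _ = 1 := by rw [h0, Units.val_one]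
  have hrank : Module.finrank F E = k := by
    have h1' : Fintype.card E = Fintype.card F ^ Module.finrank F E := Module.card_eq_pow_finrank
    rw [hE, hF] at h1'
    exact (Nat.pow_right_injective hq2 h1'.symm)
  obtain ⟨uu, huu⟩ : ∃ uu : Fˣ, algebraMap F E (uu : F) = (γ : E) ^ m := by
    apply aux_units_image q F E hF
    rw [← pow_mul, Nat.mul_comm m (q - 1), hmn2, hγn]
  have hu0 : (uu : F) ≠ 0 := uu.ne_zero
  have hFxcard : Fintype.card Fˣ = q - 1 := by rw [Fintype.card_units, hF]
  have horderuu : orderOf uu = q - 1 := by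
    have hinj : Function.Injective (Units.map (algebraMap F E).toMonoidHom) :=
      Units.map_injective (algebraMap F E).injective
    have hmap : (Units.map (algebraMap F E).toMonoidHom) uu = γ ^ m := by
      apply Units.ext
      simpa [Units.val_pow_eq_pow_val] using huu
    have h1' : orderOf (γ ^ m : Eˣ) = q - 1 := by
      rw [orderOf_pow, horder]
      have hdvd : m ∣ n := ⟨q - 1, by rw [← hmn2]; ring⟩
      rw [Nat.gcd_eq_right hdvd, ← hmn2, Nat.mul_div_cancel _ hmpos]
    rw [← orderOf_injective _ hinj uu, hmap, h1']
  have huutop : Subgroup.zpowers uu = ⊤ := by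
    apply Subgroup.eq_top_of_card_eq
    rw [Nat.card_zpowers, horderuu, Nat.card_eq_fintype_card, hFxcard]
  set δu : Fˣ := uu ^ (k * e1) * (uu ^ e2)⁻¹ with hδu_def
  have hgen : ∀ v : Fˣ, ∃ t : ℕ, δu ^ t = v := by
    have hδz : δu = uu ^ ((k * e1 : ℤ) - (e2 : ℤ)) := by
      have h1' : ((k * e1 : ℤ) - (e2 : ℤ)) = ((k * e1 : ℕ) : ℤ) - ((e2 : ℕ) : ℤ) := by
        push_cast
        ring
      rw [h1', zpow_sub, zpow_natCast, zpow_natCast]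
    have huuq : uu ^ ((q : ℤ) - 1) = 1 := by
      have hcast : ((q : ℤ) - 1) = ((q - 1 : ℕ) : ℤ) := by omega
      rw [hcast, zpow_natCast, ← hFxcard, pow_card_eq_one]
    obtain ⟨x, y, hxy⟩ := Int.isCoprime_iff_gcd_eq_one.mpr hd
    have hδy : δu ^ y = uu := by
      rw [hδz, ← zpow_mul]
      have hexp : ((k * e1 : ℤ) - (e2 : ℤ)) * y = 1 - ((q : ℤ) - 1) * x := by
        push_cast at hxy ⊢
        linarith
      rw [hexp, zpow_sub, zpow_one, zpow_mul, huuq, one_zpow]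
      simp
    intro v
    have hv : v ∈ Subgroup.zpowers uu := by rw [huutop]; trivial
    obtain ⟨t, ht⟩ := Subgroup.mem_zpowers_iff.mp hv
    have hvz : v ∈ Subgroup.zpowers δu := by
      rw [Subgroup.mem_zpowers_iff]
      exact ⟨y * t, by rw [zpow_mul, hδy, ht]⟩
    rw [← mem_powers_iff_mem_zpowers] at hvz
    exact (Submonoid.mem_powers_iff _ _).mp hvz
  have hδval : ((δu : Fˣ) : F) = (uu : F) ^ (k * e1) * ((uu : F) ^ e2)⁻¹ := by
    rw [hδu_def]
    push_cast
    ring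
  -- norm nonvanishing
  have hNz : ∀ j : ℕ, (Algebra.norm F) ((γ : E) ^ j) ≠ 0 := by
    intro j
    rw [Algebra.norm_ne_zero_iff]
    exact pow_ne_zero _ γ.ne_zero
  -- the zero-counting function
  set Z : F → E → ℕ := fun a b => ((Finset.range n).filter fun i => coord γ e1 e2 a b i = 0).card
    with hZ_def
  -- n-periodicity of coordinates
  have hcoord_per : ∀ (a : F) (b : E) (i : ℕ), coord γ e1 e2 a b (i + n) = coord γ e1 e2 a b i := by
    intro a b i
    have hg : ∀ c : ℕ, (γ : E) ^ (c * (i + n)) = (γ : E) ^ (c * i) := by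
      intro c
      have h1' : c * (i + n) = c * i + c * n := by ring
      have hx : (γ : E) ^ (c * n) = 1 := by rw [Nat.mul_comm, pow_mul, hγn, one_pow]
      rw [h1', pow_add, hx, mul_one]
    simp only [coord, hg]
  -- the key shift identity
  have hstep : ∀ (a : F) (b : E) (i : ℕ),
      coord γ e1 e2 a b (i + m) = (uu : F) ^ e2 * coord γ e1 e2 (a * ((δu : Fˣ) : F)) b i := by
    intro a b i
    have hgm1 : (γ : E) ^ (m * e1) = algebraMap F E ((uu : F) ^ e1) := by
      rw [pow_mul, ← huu, ← map_pow]
    have hN : (Algebra.norm F) ((γ : E) ^ (e1 * (i + m)))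
        = (Algebra.norm F) ((γ : E) ^ (e1 * i)) * (uu : F) ^ (e1 * k) := by
      have h1' : e1 * (i + m) = e1 * i + m * e1 := by ring
      rw [h1', pow_add, hgm1, map_mul, Algebra.norm_algebraMap, hrank, ← pow_mul]
    have hT : (Algebra.trace F E) (b * (γ : E) ^ (e2 * (i + m)))
        = (uu : F) ^ e2 * (Algebra.trace F E) (b * (γ : E) ^ (e2 * i)) := by
      have hgm2 : (γ : E) ^ (m * e2) = algebraMap F E ((uu : F) ^ e2) := by
        rw [pow_mul, ← huu, ← map_pow]
      have h1' : e2 * (i + m) = e2 * i + m * e2 := by ring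
      rw [h1', pow_add, hgm2]
      have h2' : b * ((γ : E) ^ (e2 * i) * algebraMap F E ((uu : F) ^ e2))
          = ((uu : F) ^ e2) • (b * (γ : E) ^ (e2 * i)) := by
        rw [Algebra.smul_def]
        ring
      rw [h2', map_smul, smul_eq_mul]
    simp only [coord, hN, hT, hδval]
    field_simp
    ring
  have hstep_iff : ∀ (a : F) (b : E) (i : ℕ),
      (coord γ e1 e2 a b (i + m) = 0) ↔ (coord γ e1 e2 (a * ((δu : Fˣ) : F)) b i = 0) := by
    intro a b i
    rw [hstep]
    constructor
    · intro h
      rcases mul_eq_zero.mp h with h | h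
      · exact absurd h (pow_ne_zero _ hu0)
      · exact h
    · intro h
      rw [h, mul_zero]
  -- Z is invariant under multiplying a by δ
  have hZshift : ∀ (a : F) (b : E), Z (a * ((δu : Fˣ) : F)) b = Z a b := by
    intro a b
    have hfc : ((Finset.range n).filter fun i => coord γ e1 e2 (a * ((δu : Fˣ) : F)) b i = 0)
        = ((Finset.range n).filter fun i => coord γ e1 e2 a b (i + m) = 0) := by
      apply Finset.filter_congr
      intro i _
      rw [hstep_iff]
    rw [hZ_def]
    simp only
    rw [hfc]
    exact aux_count_shift (fun i => coord γ e1 e2 a b i = 0) n m hnpos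
      (fun i => by
        show (coord γ e1 e2 a b (i + n) = 0) ↔ (coord γ e1 e2 a b i = 0)
        rw [hcoord_per])
  have hZiter : ∀ (a : F) (b : E) (t : ℕ), Z (a * ((δu : Fˣ) : F) ^ t) b = Z a b := by
    intro a b t
    induction t with
    | zero => simp
    | succ t ih =>
      rw [pow_succ, ← mul_assoc, hZshift, ih]
  have hZconst : ∀ (b : E) (a a' : F), a ≠ 0 → a' ≠ 0 → Z a b = Z a' b := by
    intro b a a' ha ha'
    obtain ⟨t, ht⟩ := hgen ((Units.mk0 a' ha') * (Units.mk0 a ha)⁻¹)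
    have hval : ((δu : Fˣ) : F) ^ t = a' * a⁻¹ := by
      have := congrArg (Units.val) ht
      push_cast at this
      simpa using this
    have haa : a * ((δu : Fˣ) : F) ^ t = a' := by
      rw [hval]
      field_simp
    rw [← haa, hZiter]
  -- total count over all a
  have hZsum : ∀ b : E, (∑ a : F, Z a b) = n := by
    intro b
    rw [hZ_def]
    simp only
    have hswap : (∑ a : F, ((Finset.range n).filter fun i => coord γ e1 e2 a b i = 0).card)
        = ∑ i ∈ Finset.range n, (Finset.univ.filter fun a : F => coord γ e1 e2 a b i = 0).card := by
      simp only [Finset.card_filter]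
      rw [Finset.sum_comm]
    rw [hswap]
    have hone : ∀ i ∈ Finset.range n,
        (Finset.univ.filter fun a : F => coord γ e1 e2 a b i = 0).card = 1 := by
      intro i _
      rw [Finset.card_eq_one]
      refine ⟨-(Algebra.trace F E (b * (γ : E) ^ (e2 * i))) /
        (Algebra.norm F) ((γ : E) ^ (e1 * i)), ?_⟩
      ext a
      simp only [Finset.mem_filter, Finset.mem_univ, true_and, Finset.mem_singleton]
      simp only [coord]
      rw [eq_div_iff (hNz (e1 * i))]
      constructor
      · intro h
        linear_combination h
      · intro h
        linear_combination h
    rw [Finset.sum_congr rfl hone, Finset.sum_const, Finset.card_range, smul_eq_mul, mul_one]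
  -- value of Z at a = 0
  have hZ0 : ∀ b : E, b ≠ 0 → Z 0 b = q ^ (k - 1) - 1 := by
    intro b hb
    set D : ℕ → Prop := fun j => Algebra.trace F E (b * (γ : E) ^ j) = 0 with hD_def
    have hDn : ∀ j, D (j + n) ↔ D j := by
      intro j
      simp only [hD_def]
      rw [pow_add, hγn, mul_one]
    have hDm : ∀ j, D (j + m) ↔ D j := by
      intro j
      simp only [hD_def]
      rw [pow_add, ← huu]
      have h2' : b * ((γ : E) ^ j * algebraMap F E (uu : F)) = (uu : F) • (b * (γ : E) ^ j) := by
        rw [Algebra.smul_def]; ring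
      rw [h2', map_smul, smul_eq_mul]
      constructor
      · intro h
        rcases mul_eq_zero.mp h with h | h
        · exact absurd h hu0
        · exact h
      · intro h
        rw [h, mul_zero]
    have hZ0D : Z 0 b = ((Finset.range n).filter fun i => D (e2 * i)).card := by
      rw [hZ_def]
      simp only
      congr 1
      apply Finset.filter_congr
      intro i _
      simp only [coord, zero_mul, zero_add, hD_def]
    have hDe2m : ∀ i, D (e2 * (i + m)) ↔ D (e2 * i) := by
      intro i
      have h1' : e2 * (i + m) = e2 * i + e2 * m := by ring
      rw [h1']
      exact aux_iter hDm e2 (e2 * i)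
    have hc1 : ((Finset.range n).filter fun i => D (e2 * i)).card
        = (q - 1) * ((Finset.range m).filter fun i => D (e2 * i)).card := by
      rw [← hmn2]
      exact aux_count_periodic _ m (q - 1) hmpos hDe2m
    have hc2 : ((Finset.range m).filter fun i => D (e2 * i)).card
        = ((Finset.range m).filter D).card :=
      aux_count_mul D m e2 hmpos hcop hDm
    have hc3 : ((Finset.range n).filter D).card = (q - 1) * ((Finset.range m).filter D).card := by
      rw [← hmn2]
      exact aux_count_periodic D m (q - 1) hmpos hDm
    have hc4 : ((Finset.range n).filter D).card = q ^ (k - 1) - 1 := by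
      have hpow := aux_count_pow γ hγ (fun x : Eˣ => Algebra.trace F E (b * (x : E)) = 0)
      rw [hcardEx] at hpow
      have hfc : ((Finset.range n).filter D)
          = ((Finset.range n).filter fun i => Algebra.trace F E (b * ((γ ^ i : Eˣ) : E)) = 0) := by
        apply Finset.filter_congr
        intro i _
        simp only [hD_def, Units.val_pow_eq_pow_val]
      rw [hfc, hpow]
      exact aux_count_tr q k hq2 F E hF hE b hb
    rw [hZ0D, hc1, hc2]
    omega
  -- value of Z for a ≠ 0, b ≠ 0
  have hZab : ∀ (a : F) (b : E), a ≠ 0 → b ≠ 0 → Z a b = q ^ (k - 1) := by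
    intro a b ha hb
    have hsum := hZsum b
    rw [← Finset.add_sum_erase _ _ (Finset.mem_univ (0 : F))] at hsum
    have herase : ∀ a' ∈ Finset.univ.erase (0 : F), Z a' b = Z a b := by
      intro a' ha'
      exact hZconst b a' a (Finset.mem_erase.mp ha').1 ha
    rw [Finset.sum_congr rfl herase, Finset.sum_const, smul_eq_mul] at hsum
    have hcarde : (Finset.univ.erase (0 : F)).card = q - 1 := by
      rw [Finset.card_erase_of_mem (Finset.mem_univ _), Finset.card_univ, hF]
    rw [hcarde, hZ0 b hb] at hsum
    have hfact : (q - 1) * q ^ (k - 1) + q ^ (k - 1) = q ^ (k - 1) * q := by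
      have h1' : (q - 1) * q ^ (k - 1) = q * q ^ (k - 1) - q ^ (k - 1) := by
        rw [Nat.sub_mul, one_mul]
      have h2' : q ^ (k - 1) ≤ q * q ^ (k - 1) := Nat.le_mul_of_pos_left _ (by omega)
      have h3' : q * q ^ (k - 1) = q ^ (k - 1) * q := Nat.mul_comm _ _
      omega
    have hXB : (q - 1) * Z a b = (q - 1) * q ^ (k - 1) := by omega
    exact Nat.eq_of_mul_eq_mul_left (by omega : 0 < q - 1) hXB
  -- value of Z for b = 0, a ≠ 0
  have hZa0 : ∀ a : F, a ≠ 0 → Z a 0 = 0 := by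
    intro a ha
    rw [hZ_def]
    simp only
    rw [Finset.card_eq_zero, Finset.filter_eq_empty_iff]
    intro i _
    simp only [coord, zero_mul, map_zero, add_zero]
    exact mul_ne_zero ha (hNz (e1 * i))
  -- Hamming weight in terms of Z
  have hwH : ∀ (a : F) (b : E), wH n γ e1 e2 a b = n - Z a b := by
    intro a b
    have hsplit := Finset.card_filter_add_card_filter_not
      (s := Finset.range n) (p := fun i => coord γ e1 e2 a b i = 0)
    simp only [Finset.card_range] at hsplit
    have hZval : Z a b = ((Finset.range n).filter fun i => coord γ e1 e2 a b i = 0).card := by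
      rw [hZ_def]
    have hident : wH n γ e1 e2 a b
        = ((Finset.range n).filter fun i => ¬ coord γ e1 e2 a b i = 0).card := by
      simp only [wH, ne_eq]
    omega
  -- the three weights
  have hVfact : q ^ (k - 1) * (q - 1) + q ^ (k - 1) = q ^ k := by
    have h1' : q ^ (k - 1) * (q - 1) + q ^ (k - 1) * 1 = q ^ (k - 1) * q := by
      rw [← Nat.mul_add]
      congr 1
      omega
    omega
  have hw_ab : ∀ (a : F) (b : E), a ≠ 0 → b ≠ 0 →
      wH n γ e1 e2 a b = q ^ (k - 1) * (q - 1) - 1 := by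
    intro a b ha hb
    rw [hwH, hZab a b ha hb]
    omega
  have hw_0b : ∀ b : E, b ≠ 0 → wH n γ e1 e2 (0 : F) b = q ^ (k - 1) * (q - 1) := by
    intro b hb
    rw [hwH, hZ0 b hb]
    omega
  have hw_a0 : ∀ a : F, a ≠ 0 → wH n γ e1 e2 a (0 : E) = n := by
    intro a ha
    rw [hwH, hZa0 a ha]
    omega
  refine ⟨?_, ⟨?_, ?_⟩, ?_⟩
  · -- cardinality
    have hinj : Function.Injective
        (fun ab : F × E => fun i : Fin n => coord γ e1 e2 ab.1 ab.2 (i : ℕ)) := by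
      rintro ⟨a, b⟩ ⟨a', b'⟩ hEq
      simp only at hEq
      have hcoords : ∀ i : ℕ, i < n → coord γ e1 e2 a b i = coord γ e1 e2 a' b' i := by
        intro i hi
        exact congrFun hEq ⟨i, hi⟩
      have hdiff : ∀ i : ℕ, i < n → coord γ e1 e2 (a - a') (b - b') i = 0 := by
        intro i hi
        have h := hcoords i hi
        simp only [coord] at h ⊢
        have hbx : (b - b') * (γ : E) ^ (e2 * i) = b * (γ : E) ^ (e2 * i) - b' * (γ : E) ^ (e2 * i) := by
          ring
        rw [hbx, map_sub]
        linear_combination h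
      have hZn : Z (a - a') (b - b') = n := by
        rw [hZ_def]
        simp only
        rw [Finset.filter_true_of_mem, Finset.card_range]
        intro i hi
        exact hdiff i (Finset.mem_range.mp hi)
      have heq1 : a = a' ∧ b = b' := by
        rcases eq_or_ne (a - a') 0 with ha | ha
        · rcases eq_or_ne (b - b') 0 with hb | hb
          · exact ⟨by linear_combination ha, by linear_combination hb⟩
          · rw [ha] at hZn
            rw [hZ0 _ hb] at hZn
            omega
        · rcases eq_or_ne (b - b') 0 with hb | hb
          · rw [hb] at hZn
            rw [hZa0 _ ha] at hZn
            omega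
          · rw [hZab _ _ ha hb] at hZn
            omega
      rw [Prod.mk.injEq]
      exact heq1
    calc Nat.card (Set.range (fun ab : F × E => fun i : Fin n => coord γ e1 e2 ab.1 ab.2 (i : ℕ)))
        = Nat.card (F × E) := Nat.card_congr (Equiv.ofInjective _ hinj).symm
      _ = q ^ (k + 1) := by
          rw [Nat.card_prod, Nat.card_eq_fintype_card, Nat.card_eq_fintype_card, hF, hE,
            pow_succ']
  · -- the minimum is attained
    show ∃ a : F, ∃ b : E, ¬(a = 0 ∧ b = 0) ∧ wH n γ e1 e2 a b = q ^ (k - 1) * (q - 1) - 1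
    exact ⟨1, 1, fun h => one_ne_zero h.1, hw_ab 1 1 one_ne_zero one_ne_zero⟩
  · -- lower bound
    intro w hw
    obtain ⟨a, b, hab, rfl⟩ := hw
    rcases eq_or_ne a 0 with ha | ha
    · rcases eq_or_ne b 0 with hb | hb
      · exact absurd ⟨ha, hb⟩ hab
      · rw [ha, hw_0b b hb]
        omega
    · rcases eq_or_ne b 0 with hb | hb
      · rw [hb, hw_a0 a ha]
        omega
      · rw [hw_ab a b ha hb]
  · -- Griesmer bound
    set T : ℕ → ℕ := fun i => ((q ^ (k - 1) * (q - 1) - 1) + q ^ i - 1) / q ^ i with hT_def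
    have hV1 : 1 ≤ q ^ (k - 1) * (q - 1) := Nat.mul_pos (by omega) (by omega)
    have hterm : ∀ i ∈ Finset.range (k + 1),
        ⌈((q ^ (k - 1) * (q - 1) - 1 : ℕ) : ℚ) / (q : ℚ) ^ i⌉ = ((T i : ℕ) : ℤ) := by
      intro i _
      have hcast : ((q : ℚ)) ^ i = ((q ^ i : ℕ) : ℚ) := by push_cast; ring
      rw [hcast, hT_def]
      exact aux_ceil _ _ (by positivity)
    rw [Finset.sum_congr rfl hterm, ← Nat.cast_sum]
    have hsumT : (∑ i ∈ Finset.range (k + 1), T i) = q ^ k - 1 := by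
      have hT0 : T 0 = q ^ (k - 1) * (q - 1) - 1 := by
        simp only [hT_def, pow_zero, Nat.div_one]
        omega
      have hTk : T k = 1 := by
        have hpos : 0 < q ^ k := by omega
        have hle : q ^ (k - 1) * (q - 1) - 1 ≤ q ^ k := by omega
        have hnum : (q ^ (k - 1) * (q - 1) - 1) + q ^ k - 1
            = q ^ k * 1 + ((q ^ (k - 1) * (q - 1) - 1) - 1) := by omega
        simp only [hT_def]
        rw [hnum, Nat.mul_add_div hpos, Nat.div_eq_of_lt (by omega), Nat.add_zero]
      have hTmid : ∀ i, 1 ≤ i → i ≤ k - 1 → T i = q ^ (k - 1 - i) * (q - 1) := by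
        intro i hi1 hi2
        have hpos : 0 < q ^ i := Nat.pow_pos (by omega)
        have hqi2 : 2 ≤ q ^ i := le_trans hq2 (Nat.le_self_pow (by omega) q)
        have hAB : q ^ i * (q ^ (k - 1 - i) * (q - 1)) = q ^ (k - 1) * (q - 1) := by
          rw [← mul_assoc, ← pow_add]
          congr 2
          omega
        have hnum : (q ^ (k - 1) * (q - 1) - 1) + q ^ i - 1
            = q ^ i * (q ^ (k - 1 - i) * (q - 1)) + (q ^ i - 2) := by
          omega
        simp only [hT_def]
        rw [hnum, Nat.mul_add_div hpos, Nat.div_eq_of_lt (by omega), Nat.add_zero]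
      rw [Finset.sum_range_succ']
      have hksplit : k = (k - 1) + 1 := by omega
      rw [hksplit, Finset.sum_range_succ, ← hksplit]
      have hmid : (∑ i ∈ Finset.range (k - 1), T (i + 1))
          = (∑ i ∈ Finset.range (k - 1), q ^ (k - 1 - 1 - i) * (q - 1)) := by
        apply Finset.sum_congr rfl
        intro i hi
        rw [Finset.mem_range] at hi
        rw [hTmid (i + 1) (by omega) (by omega)]
        congr 2
        omega
      have hmid2 : (∑ i ∈ Finset.range (k - 1), q ^ (k - 1 - 1 - i) * (q - 1))
          = (∑ i ∈ Finset.range (k - 1), q ^ i) * (q - 1) := by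
        rw [← Finset.sum_mul]
        congr 1
        exact Finset.sum_range_reflect (fun i => q ^ i) (k - 1)
      have hgeom2 : (q - 1) * (∑ i ∈ Finset.range (k - 1), q ^ i) + 1 = q ^ (k - 1) :=
        aux_geom q (by omega) (k - 1)
      rw [hmid, hmid2, hT0, hTk]
      have hcomm : (∑ i ∈ Finset.range (k - 1), q ^ i) * (q - 1)
          = (q - 1) * (∑ i ∈ Finset.range (k - 1), q ^ i) := Nat.mul_comm _ _
      omega
    rw [hsumT]
    have : ((q ^ k - 1 : ℕ) : ℤ) = (q : ℤ) ^ k - 1 := by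
      push_cast [Nat.cast_sub (by omega : 1 ≤ q ^ k)]
      ring
    rw [this]
end
end

section
/- Suppose d = gcd(q−1, k·e1 − e2) > 1. Then there exist a ∈ F_q^* and b ∈ F_{q^k}^* with w_H(c(a,b)) < q^{k−1}(q−1) − 1; consequently, the minimum distance h of C satisfies h ≤ q^{k−1}(q−1) − 2 and ∑_{i=0}^{k} ⌈h/q^i⌉ < q^k − 1, so C does not meet the Griesmer bound. -/
open Finset

noncomputable section

attribute [local instance] Classical.propDecidable

variable (p : ℕ) {F E : Type*} [Field F] [Fintype F] [Field E] [Fintype E]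
  [Algebra F E] [Algebra (ZMod p) F]

/-! ### Auxiliary lemmas -/

section AuxLemmas

variable {F' E' : Type*} [Field F'] [Fintype F'] [Field E'] [Fintype E'] [Algebra F' E']

/-- The norm of a finite field extension is given by `x ↦ x^{1 + q + ⋯ + q^{k-1}}`. -/
lemma norm_formula (p' : ℕ) (hp' : p'.Prime) [CharP F' p'] (x : E') :
    algebraMap F' E' (Algebra.norm F' x) =
      x ^ (∑ j ∈ Finset.range (Module.finrank F' E'), Fintype.card F' ^ j) := by
  classical
  haveI : Module.Finite F' E' := Module.Finite.of_finite
  haveI : Fact p'.Prime := ⟨hp'⟩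
  haveI : CharP E' p' := charP_of_injective_algebraMap' F' p'
  obtain ⟨eF, -, hcF⟩ := FiniteField.card F' p'
  set q := Fintype.card F' with hq
  set k := Module.finrank F' E' with hk
  have hq1 : 1 < q := Fintype.one_lt_card
  have hk0 : 0 < k := Module.finrank_pos
  have hcE : Fintype.card E' = q ^ k := Module.card_eq_pow_finrank
  have hadd : ∀ x y : E', (x + y) ^ q = x ^ q + y ^ q := by
    intro x y
    rw [hcF]
    exact add_pow_char_pow x y p' eF
  let fr : E' →ₐ[F'] E' :=
    { toFun := fun x => x ^ q
      map_one' := one_pow q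
      map_mul' := fun x y => mul_pow x y q
      map_zero' := zero_pow (Fintype.card_pos (α := F')).ne'
      map_add' := hadd
      commutes' := fun a => by
        show (algebraMap F' E' a) ^ q = algebraMap F' E' a
        rw [← map_pow, hq, FiniteField.pow_card] }
  have hinj : Function.Injective fr := fr.toRingHom.injective
  have hbij : Function.Bijective fr := ⟨hinj, Finite.injective_iff_surjective.mp hinj⟩
  let φ : E' ≃ₐ[F'] E' := AlgEquiv.ofBijective fr hbij
  have hφ : ∀ x : E', φ x = x ^ q := fun x => rfl
  have hφpow : ∀ (j : ℕ) (x : E'), (φ ^ j) x = x ^ q ^ j := by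
    intro j
    induction j with
    | zero => intro x; simp
    | succ j ih =>
      intro x
      rw [pow_succ, AlgEquiv.mul_apply, hφ, ih, ← pow_mul, pow_succ']
  have hφk : φ ^ k = 1 := by
    apply AlgEquiv.ext
    intro x
    rw [hφpow, ← hcE, FiniteField.pow_card]
    rfl
  obtain ⟨g, hg⟩ := IsCyclic.exists_generator (α := E'ˣ)
  have hordg : orderOf g = q ^ k - 1 := by
    rw [orderOf_eq_card_of_forall_mem_zpowers hg, Nat.card_eq_fintype_card,
      Fintype.card_units, hcE]
  have hordφ : orderOf φ = k := by
    have hdvd : orderOf φ ∣ k := orderOf_dvd_of_pow_eq_one hφk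
    have hle : orderOf φ ≤ k := Nat.le_of_dvd hk0 hdvd
    by_contra hne
    have hlt : orderOf φ < k := lt_of_le_of_ne hle hne
    have h1 : 0 < orderOf φ := orderOf_pos φ
    have hfix : (φ ^ orderOf φ) (g : E') = (g : E') := by
      rw [pow_orderOf_eq_one]; rfl
    rw [hφpow] at hfix
    have hu : (g : E'ˣ) ^ (q ^ orderOf φ) = g ^ 1 := by
      apply Units.ext
      rw [pow_one]
      push_cast
      exact hfix
    have hmod := (pow_eq_pow_iff_modEq).mp hu
    rw [hordg] at hmod
    have hdd : (q ^ k - 1) ∣ (q ^ orderOf φ - 1) := (Nat.modEq_iff_dvd' (Nat.one_le_pow _ _ (by omega))).mp hmod.symm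
    have hpos : 0 < q ^ orderOf φ - 1 := by
      have : q ≤ q ^ orderOf φ := Nat.le_self_pow h1.ne' q
      omega
    have hle2 := Nat.le_of_dvd hpos hdd
    have : q ^ orderOf φ < q ^ k := Nat.pow_lt_pow_right hq1 hlt
    omega
  have hbijk : Function.Bijective (fun j : Fin k => φ ^ (j : ℕ)) := by
    rw [Fintype.bijective_iff_injective_and_card]
    constructor
    · intro i j hij
      apply Fin.ext
      exact pow_injOn_Iio_orderOf (by simp [hordφ, i.isLt]) (by simp [hordφ, j.isLt]) hij
    · rw [Fintype.card_fin, ← Nat.card_eq_fintype_card, IsGalois.card_aut_eq_finrank]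
  calc algebraMap F' E' (Algebra.norm F' x) = ∏ σ : E' ≃ₐ[F'] E', σ x :=
        Algebra.norm_eq_prod_automorphisms F' x
    _ = ∏ j : Fin k, (φ ^ (j : ℕ)) x :=
        (Fintype.prod_bijective _ hbijk (fun j => (φ ^ (j : ℕ)) x) (fun σ => σ x)
          (fun j => rfl)).symm
    _ = ∏ j : Fin k, x ^ q ^ (j : ℕ) := by
        exact Finset.prod_congr rfl fun j _ => hφpow _ _
    _ = ∏ j ∈ Finset.range k, x ^ q ^ j := Fin.prod_univ_eq_prod_range (fun j => x ^ q ^ j) k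
    _ = x ^ ∑ j ∈ Finset.range k, q ^ j := Finset.prod_pow_eq_pow_sum _ _ _

lemma trace_fiber_eq [FiniteDimensional F' E'] [Algebra.IsSeparable F' E']
    (v : E') (hv : v ≠ 0) (c : F') :
    ((Finset.univ : Finset E').filter fun b => Algebra.trace F' E' (b * v) = c).card
      = ((Finset.univ : Finset E').filter fun b => Algebra.trace F' E' (b * v) = 0).card := by
  classical
  obtain ⟨z, hz⟩ := Algebra.trace_surjective F' E' c
  set b0 := z * v⁻¹ with hb0
  have hb0v : Algebra.trace F' E' (b0 * v) = c := by
    rw [hb0, mul_assoc, inv_mul_cancel₀ hv, mul_one, hz]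
  apply Finset.card_bij' (fun b _ => b - b0) (fun b _ => b + b0)
  · intro b hb
    simp only [Finset.mem_filter, Finset.mem_univ, true_and] at hb ⊢
    rw [sub_mul, map_sub, hb, hb0v, sub_self]
  · intro b hb
    simp only [Finset.mem_filter, Finset.mem_univ, true_and] at hb ⊢
    rw [add_mul, map_add, hb, hb0v, zero_add]
  · intro b _; ring
  · intro b _; ring

lemma trace_fiber_count [FiniteDimensional F' E'] [Algebra.IsSeparable F' E']
    (v : E') (hv : v ≠ 0) :
    Fintype.card F' *
      ((Finset.univ : Finset E').filter fun b => Algebra.trace F' E' (b * v) = 0).card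
      = Fintype.card E' := by
  classical
  have h : Fintype.card E'
      = ∑ c : F', ((Finset.univ : Finset E').filter
          fun b => Algebra.trace F' E' (b * v) = c).card := by
    rw [← Finset.card_univ (α := E')]
    exact Finset.card_eq_sum_card_fiberwise fun x _ => Finset.mem_univ _
  rw [h, Finset.sum_congr rfl fun c _ => trace_fiber_eq v hv c, Finset.sum_const,
    Finset.card_univ, smul_eq_mul]

lemma pair_count [FiniteDimensional F' E'] [Algebra.IsSeparable F' E']
    (u : F') (hu : u ≠ 0) (v : E') (hv : v ≠ 0) :
    ∑ a ∈ (Finset.univ : Finset F').filter (fun a => a ≠ 0),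
      ∑ b ∈ (Finset.univ : Finset E').filter (fun b => b ≠ 0),
        (if a * u + Algebra.trace F' E' (b * v) = 0 then (1 : ℕ) else 0)
    = Fintype.card E' -
      ((Finset.univ : Finset E').filter fun b => Algebra.trace F' E' (b * v) = 0).card := by
  classical
  rw [Finset.sum_comm]
  have hinner : ∀ b : E',
      ∑ a ∈ (Finset.univ : Finset F').filter (fun a => a ≠ 0),
        (if a * u + Algebra.trace F' E' (b * v) = 0 then (1 : ℕ) else 0)
      = if Algebra.trace F' E' (b * v) = 0 then 0 else 1 := by
    intro b
    rw [← Finset.card_filter]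
    by_cases hT0 : Algebra.trace F' E' (b * v) = 0
    · rw [if_pos hT0]
      refine Finset.card_eq_zero.mpr (Finset.filter_eq_empty_iff.mpr ?_)
      intro a ha hcontra
      simp only [Finset.mem_filter, Finset.mem_univ, true_and] at ha
      rw [hT0, add_zero] at hcontra
      exact ha ((mul_eq_zero.mp hcontra).resolve_right hu)
    · rw [if_neg hT0]
      rw [Finset.card_eq_one]
      refine ⟨-(Algebra.trace F' E' (b * v)) * u⁻¹, ?_⟩
      ext a
      simp only [Finset.mem_filter, Finset.mem_univ, true_and, Finset.mem_singleton]
      constructor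
      · rintro ⟨ha, h⟩
        have h' : a * u = -(Algebra.trace F' E' (b * v)) := eq_neg_of_add_eq_zero_left h
        rw [eq_mul_inv_iff_mul_eq₀ hu]
        exact h'
      · rintro rfl
        refine ⟨mul_ne_zero (neg_ne_zero.mpr hT0) (inv_ne_zero hu), ?_⟩
        field_simp
        ring
  rw [Finset.sum_congr rfl (fun b _ => hinner b)]
  have hstep : ∑ b ∈ (Finset.univ : Finset E').filter (fun b => b ≠ 0),
      (if Algebra.trace F' E' (b * v) = 0 then (0 : ℕ) else 1)
      = ((Finset.univ : Finset E').filter fun b => ¬ Algebra.trace F' E' (b * v) = 0).card := by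
    rw [Finset.card_filter, Finset.sum_filter]
    apply Finset.sum_congr rfl
    intro b _
    by_cases hb : b = 0
    · subst hb
      simp
    · by_cases hT : Algebra.trace F' E' (b * v) = 0 <;> simp [hb, hT]
  rw [hstep]
  have h2 := Finset.card_filter_add_card_filter_not
    (s := (Finset.univ : Finset E')) (p := fun b => Algebra.trace F' E' (b * v) = 0)
  rw [Finset.card_univ] at h2
  omega

lemma filter_periodic (P : ℕ → Prop) [DecidablePred P] (s : ℕ)
    (hP : ∀ i, P (i + s) ↔ P i) (d : ℕ) :
    ((Finset.range (d * s)).filter P).card = d * ((Finset.range s).filter P).card := by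
  classical
  have hshift : ∀ (t i : ℕ), P (t * s + i) ↔ P i := by
    intro t
    induction t with
    | zero => intro i; simp
    | succ t ih =>
      intro i
      have h : (t + 1) * s + i = (t * s + i) + s := by ring
      rw [h, hP, ih]
  induction d with
  | zero => simp
  | succ d ih =>
    have h1 : (d + 1) * s = d * s + s := by ring
    rw [h1, Finset.range_add, Finset.filter_union, Finset.card_union_of_disjoint, ih]
    · rw [Finset.filter_map, Finset.card_map]
      have h2 : ((Finset.range s).filter fun i => P (addLeftEmbedding (d * s) i)).card
          = ((Finset.range s).filter P).card := by
        congr 1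
        apply Finset.filter_congr
        intro i _
        simp only [addLeftEmbedding_apply]
        exact hshift d i
      have h3 : ((Finset.range s).filter ((fun b => P b) ∘ (addLeftEmbedding (d * s)))).card
          = ((Finset.range s).filter fun i => P (addLeftEmbedding (d * s) i)).card := rfl
      rw [h3, h2]
      ring
    · rw [Finset.disjoint_left]
      intro x hx hx'
      simp only [Finset.mem_filter, Finset.mem_range] at hx
      simp only [Finset.mem_filter, Finset.mem_map, Finset.mem_range,
        addLeftEmbedding_apply] at hx'
      obtain ⟨⟨y, _, rfl⟩, -⟩ := hx'
      omega

end AuxLemmas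

theorem statement_5
    (p e k q : ℕ) (hp : p.Prime) (he : 0 < e) (hk : 2 ≤ k) (hq : q = p ^ e)
    (F E : Type*) [Field F] [Fintype F] [Field E] [Fintype E]
    [Algebra F E] [Algebra (ZMod p) F]
    (hF : Fintype.card F = q) (hE : Fintype.card E = q ^ k)
    (γ : Eˣ) (hγ : ∀ x : Eˣ, x ∈ Subgroup.zpowers γ)
    (e1 e2 d : ℕ) (he1 : 0 < e1) (he2 : 0 < e2)
    (h1 : Nat.gcd ((q ^ k - 1) / (q - 1)) e2 = 1)
    (h2 : Nat.gcd (q - 1) (Nat.gcd e1 e2) = 1)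
    (hd : Int.gcd ((q : ℤ) - 1) ((k : ℤ) * e1 - e2) = d) (hd1 : 1 < d) :
    (∃ a : F, ∃ b : E, a ≠ 0 ∧ b ≠ 0 ∧
      wH (q ^ k - 1) γ e1 e2 a b < q ^ (k - 1) * (q - 1) - 1) ∧
    ∀ h : ℕ,
      IsLeast {w : ℕ | ∃ a : F, ∃ b : E, ¬(a = 0 ∧ b = 0) ∧ wH (q ^ k - 1) γ e1 e2 a b = w} h →
      h ≤ q ^ (k - 1) * (q - 1) - 2 ∧
      ∑ i ∈ Finset.range (k + 1), ⌈(h : ℚ) / (q : ℚ) ^ i⌉ < (q : ℤ) ^ k - 1 := by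
  classical
  haveI : Fact p.Prime := ⟨hp⟩
  haveI hCF : CharP F p := (Algebra.charP_iff (ZMod p) F p).mp (ZMod.charP p)
  haveI : Module.Finite F E := Module.Finite.of_finite
  -- basic numeric facts
  have hq2 : 2 ≤ q := by
    rw [hq]
    calc 2 ≤ p := hp.two_le
    _ ≤ p ^ e := Nat.le_self_pow he.ne' p
  have hdq : (d : ℤ) ∣ (q : ℤ) - 1 := by
    have h := Int.gcd_dvd_left (a := (q : ℤ) - 1) (b := (k : ℤ) * e1 - e2)
    rwa [hd] at h
  have hdke : (d : ℤ) ∣ (k : ℤ) * e1 - e2 := by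
    have h := Int.gcd_dvd_right (a := (q : ℤ) - 1) (b := (k : ℤ) * e1 - e2)
    rwa [hd] at h
  have hdq1 : d ∣ q - 1 := by
    have hc : ((q - 1 : ℕ) : ℤ) = (q : ℤ) - 1 := by
      have : 1 ≤ q := by omega
      push_cast [this]
      ring
    rw [← Int.natCast_dvd_natCast, hc]
    exact hdq
  have hq3 : 3 ≤ q := by
    have := Nat.le_of_dvd (by omega) hdq1
    omega
  have hkfin : Module.finrank F E = k := by
    have hcard : Fintype.card E = Fintype.card F ^ Module.finrank F E := Module.card_eq_pow_finrank
    rw [hE, hF] at hcard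
    exact (Nat.pow_right_injective hq2 hcard.symm)
  set n := q ^ k - 1 with hn
  set mnat := ∑ j ∈ Finset.range k, q ^ j with hmnat
  have hmnorm : ∀ x : E, algebraMap F E (Algebra.norm F x) = x ^ mnat := by
    intro x
    have h := norm_formula (F' := F) (E' := E) p hp x
    rwa [hkfin, hF] at h
  have hnE : Fintype.card Eˣ = n := by rw [Fintype.card_units, hE]
  have hordγ : orderOf γ = n := by
    rw [orderOf_eq_card_of_forall_mem_zpowers hγ, Nat.card_eq_fintype_card, hnE]
  -- powers of q facts
  have hqk1 : 1 ≤ q ^ k := Nat.one_le_pow _ _ (by omega)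
  have hqk3 : q ≤ q ^ k := Nat.le_self_pow (by omega) q
  have hP1 : 1 ≤ q ^ (k - 1) := Nat.one_le_pow _ _ (by omega)
  have hXYq : q ^ (k - 1) * (q - 1) + q ^ (k - 1) = q ^ k := by
    have h1' : q - 1 + 1 = q := by omega
    have h2' : q ^ (k - 1) * (q - 1) + q ^ (k - 1) = q ^ (k - 1) * q := by
      calc q ^ (k - 1) * (q - 1) + q ^ (k - 1) = q ^ (k - 1) * ((q - 1) + 1) := by ring
        _ = q ^ (k - 1) * q := by rw [h1']
    rw [h2', ← pow_succ]
    congr 1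
    omega
  have hX2 : 2 ≤ q ^ (k - 1) * (q - 1) := by
    calc 2 = 1 * 2 := by norm_num
    _ ≤ q ^ (k - 1) * (q - 1) := Nat.mul_le_mul hP1 (by omega)
  -- d divides n
  have hd_n : d ∣ n := by
    have h1' : (d : ℤ) ∣ (q : ℤ) ^ k - 1 := hdq.trans (by simpa using sub_dvd_pow_sub_pow (q : ℤ) 1 k)
    have hcast : ((n : ℕ) : ℤ) = (q : ℤ) ^ k - 1 := by
      rw [hn]
      push_cast [hqk1]
      ring
    rw [← Int.natCast_dvd_natCast, hcast]
    exact h1'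
  set s0 := n / d with hs0
  have hns : n = d * s0 := (Nat.mul_div_cancel' hd_n).symm
  -- d ∣ mnat * e1 - e2  (as integers)
  have hm_k : ((q : ℤ) - 1) ∣ (mnat : ℤ) - k := by
    have hsum : (mnat : ℤ) - k = ∑ j ∈ Finset.range k, ((q : ℤ) ^ j - 1) := by
      rw [Finset.sum_sub_distrib, Finset.sum_const, Finset.card_range, hmnat]
      push_cast
      ring
    rw [hsum]
    exact Finset.dvd_sum fun j _ => by simpa using sub_dvd_pow_sub_pow (q : ℤ) 1 j
  have hdm : (d : ℤ) ∣ (mnat : ℤ) * e1 - e2 := by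
    have ha : (d : ℤ) ∣ ((mnat : ℤ) - k) * e1 := ((hdq.trans hm_k).mul_right _)
    have hb : (mnat : ℤ) * e1 - e2 = ((mnat : ℤ) - k) * e1 + ((k : ℤ) * e1 - e2) := by ring
    rw [hb]
    exact dvd_add ha hdke
  have hdvd_ns : (n : ℤ) ∣ ((mnat : ℤ) * e1 - e2) * s0 := by
    obtain ⟨t, ht⟩ := hdm
    refine ⟨t, ?_⟩
    rw [ht]
    have : ((n : ℕ) : ℤ) = (d : ℤ) * s0 := by exact_mod_cast congrArg (Nat.cast (R := ℤ)) hns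
    rw [this]
    ring
  -- the multiplier relation
  have hmod : (e2 * s0) ≡ (e1 * s0 * mnat) [MOD n] := by
    rw [Nat.modEq_iff_dvd]
    have hc : ((e1 * s0 * mnat : ℕ) : ℤ) - ((e2 * s0 : ℕ) : ℤ) = ((mnat : ℤ) * e1 - e2) * s0 := by
      push_cast
      ring
    rw [hc]
    exact hdvd_ns
  have hunit : γ ^ (e2 * s0) = γ ^ (e1 * s0 * mnat) := by
    rw [pow_eq_pow_iff_modEq, hordγ]
    exact hmod
  set C : F := Algebra.norm F ((γ : E) ^ (e1 * s0)) with hC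
  have hkey : ((γ : E)) ^ (e2 * s0) = algebraMap F E C := by
    rw [hC, hmnorm, ← pow_mul]
    exact_mod_cast congrArg Units.val hunit
  have hC0 : C ≠ 0 := by
    rw [hC, Algebra.norm_ne_zero_iff]
    exact pow_ne_zero _ γ.ne_zero
  -- periodicity of coordinates
  have hper : ∀ (a : F) (b : E) (i : ℕ),
      coord γ e1 e2 a b (i + s0) = C * coord γ e1 e2 a b i := by
    intro a b i
    simp only [coord]
    rw [mul_add e1, mul_add e2, pow_add, pow_add, map_mul, hkey]
    have htr : b * ((γ : E) ^ (e2 * i) * algebraMap F E C)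
        = C • (b * (γ : E) ^ (e2 * i)) := by
      rw [Algebra.smul_def]
      ring
    rw [htr, map_smul, smul_eq_mul]
    ring
  -- the zero-count function
  set Z : F → E → ℕ :=
    fun a b => ((Finset.range n).filter fun i => coord γ e1 e2 a b i = 0).card with hZdef
  have hZw : ∀ a b, Z a b + wH n γ e1 e2 a b = n := by
    intro a b
    have h := Finset.card_filter_add_card_filter_not (s := Finset.range n)
      (p := fun i => coord γ e1 e2 a b i = 0)
    simpa [hZdef, wH, Finset.card_range] using h
  have hdZ : ∀ a b, d ∣ Z a b := by
    intro a b
    have hPer : ∀ i, (coord γ e1 e2 a b (i + s0) = 0) ↔ (coord γ e1 e2 a b i = 0) := by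
      intro i
      rw [hper]
      constructor
      · intro hcc
        rcases mul_eq_zero.mp hcc with hcc | hcc
        · exact absurd hcc hC0
        · exact hcc
      · intro hcc
        rw [hcc, mul_zero]
    have hcard : Z a b = d * ((Finset.range s0).filter
        fun i => coord γ e1 e2 a b i = 0).card := by
      rw [hZdef]
      simp only
      rw [hns]
      exact filter_periodic _ s0 hPer d
    rw [hcard]
    exact dvd_mul_right d _
  -- the fiber count
  have hfib : ∀ v : E, v ≠ 0 →
      ((Finset.univ : Finset E).filter fun b => Algebra.trace F E (b * v) = 0).card
        = q ^ (k - 1) := by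
    intro v hv
    have h := trace_fiber_count (F' := F) v hv
    rw [hF, hE] at h
    have hqq : q * q ^ (k - 1) = q ^ k := by
      rw [← pow_succ']
      congr 1
      omega
    exact Nat.eq_of_mul_eq_mul_left (show 0 < q by omega) (by rw [h, hqq])
  -- total count
  set A := (Finset.univ : Finset F).filter (fun a => a ≠ 0) with hA
  set B := (Finset.univ : Finset E).filter (fun b => b ≠ 0) with hB
  have hAcard : A.card = q - 1 := by
    have h : A = Finset.univ.erase (0 : F) := by
      ext x
      simp [hA, Finset.mem_erase, and_comm]
    rw [h, Finset.card_erase_of_mem (Finset.mem_univ _), Finset.card_univ, hF]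
  have hBcard : B.card = q ^ k - 1 := by
    have h : B = Finset.univ.erase (0 : E) := by
      ext x
      simp [hB, Finset.mem_erase, and_comm]
    rw [h, Finset.card_erase_of_mem (Finset.mem_univ _), Finset.card_univ, hE]
  have hcount : ∀ i : ℕ,
      ∑ a ∈ A, ∑ b ∈ B, (if coord γ e1 e2 a b i = 0 then (1 : ℕ) else 0)
        = q ^ k - q ^ (k - 1) := by
    intro i
    have hu0 : Algebra.norm F ((γ : E) ^ (e1 * i)) ≠ 0 := by
      rw [Algebra.norm_ne_zero_iff]
      exact pow_ne_zero _ γ.ne_zero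
    have hv0 : ((γ : E) ^ (e2 * i)) ≠ 0 := pow_ne_zero _ γ.ne_zero
    have h := pair_count (F' := F) (Algebra.norm F ((γ : E) ^ (e1 * i))) hu0 ((γ : E) ^ (e2 * i)) hv0
    rw [hfib _ hv0, hE] at h
    rw [hA, hB]
    simp only [coord]
    exact h
  have hTotal : ∑ a ∈ A, ∑ b ∈ B, Z a b = n * (q ^ k - q ^ (k - 1)) := by
    have hZsum : ∀ a b, Z a b
        = ∑ i ∈ Finset.range n, (if coord γ e1 e2 a b i = 0 then (1 : ℕ) else 0) := by
      intro a b
      rw [hZdef]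
      exact Finset.card_filter _ _
    calc ∑ a ∈ A, ∑ b ∈ B, Z a b
        = ∑ a ∈ A, ∑ b ∈ B, ∑ i ∈ Finset.range n,
            (if coord γ e1 e2 a b i = 0 then (1 : ℕ) else 0) := by
          exact Finset.sum_congr rfl fun a _ => Finset.sum_congr rfl fun b _ => hZsum a b
      _ = ∑ a ∈ A, ∑ i ∈ Finset.range n, ∑ b ∈ B,
            (if coord γ e1 e2 a b i = 0 then (1 : ℕ) else 0) :=
          Finset.sum_congr rfl fun a _ => Finset.sum_comm
      _ = ∑ i ∈ Finset.range n, ∑ a ∈ A, ∑ b ∈ B,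
            (if coord γ e1 e2 a b i = 0 then (1 : ℕ) else 0) := Finset.sum_comm
      _ = ∑ i ∈ Finset.range n, (q ^ k - q ^ (k - 1)) :=
          Finset.sum_congr rfl fun i _ => hcount i
      _ = n * (q ^ k - q ^ (k - 1)) := by
          rw [Finset.sum_const, Finset.card_range, smul_eq_mul]
  -- existence of a large zero set
  have hex : ∃ a : F, ∃ b : E, a ≠ 0 ∧ b ≠ 0 ∧ q ^ (k - 1) < Z a b := by
    by_contra hcon
    push_neg at hcon
    have hZle : ∀ a ∈ A, ∀ b ∈ B, Z a b ≤ q ^ (k - 1) - 1 := by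
      intro a ha b hb
      rw [hA, Finset.mem_filter] at ha
      rw [hB, Finset.mem_filter] at hb
      have hle1 := hcon a b ha.2 hb.2
      have hdvd := hdZ a b
      have hne : Z a b ≠ q ^ (k - 1) := by
        intro heq
        have h1' : d ∣ q ^ (k - 1) := heq ▸ hdvd
        have h2' : d ∣ q ^ (k - 1) - 1 := by
          have hdd : (d : ℤ) ∣ (q : ℤ) ^ (k - 1) - 1 :=
            hdq.trans (by simpa using sub_dvd_pow_sub_pow (q : ℤ) 1 (k - 1))
          have hc : ((q ^ (k - 1) - 1 : ℕ) : ℤ) = (q : ℤ) ^ (k - 1) - 1 := by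
            push_cast [hP1]
            ring
          rw [← Int.natCast_dvd_natCast, hc]
          exact hdd
        have := Nat.dvd_sub h1' h2'
        have hsub : q ^ (k - 1) - (q ^ (k - 1) - 1) = 1 := by omega
        rw [hsub] at this
        have := Nat.le_of_dvd one_pos this
        omega
      omega
    have hbound : ∑ a ∈ A, ∑ b ∈ B, Z a b ≤ (q - 1) * ((q ^ k - 1) * (q ^ (k - 1) - 1)) := by
      calc ∑ a ∈ A, ∑ b ∈ B, Z a b
          ≤ ∑ a ∈ A, ((q ^ k - 1) * (q ^ (k - 1) - 1)) := by
            apply Finset.sum_le_sum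
            intro a ha
            calc ∑ b ∈ B, Z a b ≤ B.card • (q ^ (k - 1) - 1) :=
                  Finset.sum_le_card_nsmul B _ _ (hZle a ha)
              _ = (q ^ k - 1) * (q ^ (k - 1) - 1) := by rw [hBcard, smul_eq_mul]
        _ = A.card • ((q ^ k - 1) * (q ^ (k - 1) - 1)) := by
            rw [Finset.sum_const]
        _ = (q - 1) * ((q ^ k - 1) * (q ^ (k - 1) - 1)) := by rw [hAcard, smul_eq_mul]
    have heq1 : q ^ k - q ^ (k - 1) = q ^ (k - 1) * (q - 1) := by omega
    rw [hTotal, heq1] at hbound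
    -- n * (q^(k-1) * (q-1)) ≤ (q-1) * ((q^k - 1) * (q^(k-1) - 1))
    have hXpos : 0 < q ^ k - 1 := by omega
    have hlt1 : (q ^ k - 1) * (q ^ (k - 1) - 1) < (q ^ k - 1) * q ^ (k - 1) :=
      (Nat.mul_lt_mul_left hXpos).mpr (by omega)
    have hlt2 : (q - 1) * ((q ^ k - 1) * (q ^ (k - 1) - 1))
        < (q - 1) * ((q ^ k - 1) * q ^ (k - 1)) :=
      (Nat.mul_lt_mul_left (by omega)).mpr hlt1
    have heq2 : n * (q ^ (k - 1) * (q - 1)) = (q - 1) * ((q ^ k - 1) * q ^ (k - 1)) := by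
      rw [hn]
      ring
    rw [heq2] at hbound
    omega
  -- first main conclusion
  have main1 : ∃ a : F, ∃ b : E, a ≠ 0 ∧ b ≠ 0 ∧
      wH n γ e1 e2 a b < q ^ (k - 1) * (q - 1) - 1 := by
    obtain ⟨a, b, ha, hb, hZgt⟩ := hex
    refine ⟨a, b, ha, hb, ?_⟩
    have h := hZw a b
    omega
  refine ⟨main1, ?_⟩
  intro h hLeast
  obtain ⟨a, b, ha, hb, hw⟩ := main1
  have hmem : wH n γ e1 e2 a b ∈
      {w : ℕ | ∃ a : F, ∃ b : E, ¬(a = 0 ∧ b = 0) ∧ wH n γ e1 e2 a b = w} :=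
    ⟨a, b, by tauto, rfl⟩
  have hleh : h ≤ wH n γ e1 e2 a b := hLeast.2 hmem
  have hh2 : h ≤ q ^ (k - 1) * (q - 1) - 2 := by omega
  refine ⟨hh2, ?_⟩
  obtain ⟨t, rfl⟩ : ∃ t, k = t + 2 := ⟨k - 2, by omega⟩
  have hek1 : t + 2 - 1 = t + 1 := rfl
  rw [hek1] at hh2 hXYq hP1
  have hhb : h ≤ q ^ (t + 2) - q ^ (t + 1) - 2 := by omega
  have hhqk : h ≤ q ^ (t + 2) := by omega
  have hge2 : 2 ≤ q ^ (t + 2) - q ^ (t + 1) := by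
    have := hX2
    rw [hek1] at this
    omega
  have hle12 : q ^ (t + 1) ≤ q ^ (t + 2) := Nat.pow_le_pow_right (by omega) (by omega)
  set Bnd : ℕ → ℤ := fun i =>
    if i = 0 then (q : ℤ) ^ (t + 2) - (q : ℤ) ^ (t + 1) - 2
    else if i < t + 2 then (q : ℤ) ^ (t + 2 - i) - (q : ℤ) ^ (t + 1 - i)
    else 1 with hBnd
  have hterm : ∀ i ∈ Finset.range (t + 2 + 1), ⌈(h : ℚ) / (q : ℚ) ^ i⌉ ≤ Bnd i := by
    intro i hi
    rw [Finset.mem_range] at hi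
    have hqQ : (0 : ℚ) < (q : ℚ) ^ i := by positivity
    rw [Int.ceil_le, div_le_iff₀ hqQ]
    rcases Nat.eq_zero_or_pos i with rfl | hi0
    · simp only [hBnd, if_pos rfl, pow_zero, mul_one]
      have hcast : ((q ^ (t + 2) - q ^ (t + 1) - 2 : ℕ) : ℚ)
          = (q : ℚ) ^ (t + 2) - (q : ℚ) ^ (t + 1) - 2 := by
        rw [Nat.cast_sub hge2, Nat.cast_sub hle12]
        push_cast
        ring
      calc (h : ℚ) ≤ ((q ^ (t + 2) - q ^ (t + 1) - 2 : ℕ) : ℚ) := by exact_mod_cast hhb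
        _ = (q : ℚ) ^ (t + 2) - (q : ℚ) ^ (t + 1) - 2 := hcast
        _ = (((q : ℤ) ^ (t + 2) - (q : ℤ) ^ (t + 1) - 2 : ℤ) : ℚ) := by push_cast; ring
    · by_cases hik : i < t + 2
      · simp only [hBnd, if_neg hi0.ne', if_pos hik]
        have he1' : t + 2 - i + i = t + 2 := by omega
        have he2' : t + 1 - i + i = t + 1 := by omega
        have hRHS : (((q : ℤ) ^ (t + 2 - i) - (q : ℤ) ^ (t + 1 - i) : ℤ) : ℚ) * (q : ℚ) ^ i
            = (q : ℚ) ^ (t + 2) - (q : ℚ) ^ (t + 1) := by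
          push_cast
          rw [sub_mul, ← pow_add, ← pow_add, he1', he2']
        rw [hRHS]
        have hc2 : ((q ^ (t + 2) - q ^ (t + 1) : ℕ) : ℚ)
            = (q : ℚ) ^ (t + 2) - (q : ℚ) ^ (t + 1) := by
          rw [Nat.cast_sub hle12]
          push_cast
          ring
        calc (h : ℚ) ≤ ((q ^ (t + 2) - q ^ (t + 1) : ℕ) : ℚ) := by
              have : h ≤ q ^ (t + 2) - q ^ (t + 1) := by omega
              exact_mod_cast this
          _ = _ := hc2
      · have hieq : i = t + 2 := by omega
        simp only [hBnd, if_neg hi0.ne', if_neg hik]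
        rw [Int.cast_one, one_mul, hieq]
        calc (h : ℚ) ≤ ((q ^ (t + 2) : ℕ) : ℚ) := by exact_mod_cast hhqk
          _ = (q : ℚ) ^ (t + 2) := by push_cast; ring
  have hsum : ∑ i ∈ Finset.range (t + 2 + 1), Bnd i = (q : ℤ) ^ (t + 2) - 2 := by
    rw [Finset.sum_range_succ', Finset.sum_range_succ]
    have hmid : ∑ i ∈ Finset.range (t + 1), Bnd (i + 1) = (q : ℤ) ^ (t + 1) - 1 := by
      have hcongr : ∀ i ∈ Finset.range (t + 1),
          Bnd (i + 1) = (q : ℤ) ^ (t + 1 - i) - (q : ℤ) ^ (t - i) := by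
        intro i hi
        rw [Finset.mem_range] at hi
        simp only [hBnd]
        rw [if_neg (by omega), if_pos (by omega)]
        have e1' : t + 2 - (i + 1) = t + 1 - i := by omega
        have e2' : t + 1 - (i + 1) = t - i := by omega
        rw [e1', e2']
      rw [Finset.sum_congr rfl hcongr]
      have hcongr2 : ∀ j ∈ Finset.range (t + 1),
          (q : ℤ) ^ (t + 1 - j) - (q : ℤ) ^ (t - j)
            = (q : ℤ) ^ ((t + 1 - 1 - j) + 1) - (q : ℤ) ^ (t + 1 - 1 - j) := by
        intro j hj
        rw [Finset.mem_range] at hj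
        have e1' : t + 1 - 1 - j = t - j := by omega
        have e2' : t - j + 1 = t + 1 - j := by omega
        rw [e1', e2']
      rw [Finset.sum_congr rfl hcongr2,
        Finset.sum_range_reflect (fun j => (q : ℤ) ^ (j + 1) - (q : ℤ) ^ j) (t + 1),
        Finset.sum_range_sub (fun j => (q : ℤ) ^ j) (t + 1)]
      simp
    have hb0 : Bnd 0 = (q : ℤ) ^ (t + 2) - (q : ℤ) ^ (t + 1) - 2 := by
      simp [hBnd]
    have hbk : Bnd (t + 1 + 1) = 1 := by
      simp only [hBnd]
      rw [if_neg (by omega), if_neg (by omega)]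
    rw [hmid, hb0, hbk]
    ring
  calc ∑ i ∈ Finset.range (t + 2 + 1), ⌈(h : ℚ) / (q : ℚ) ^ i⌉
      ≤ ∑ i ∈ Finset.range (t + 2 + 1), Bnd i := Finset.sum_le_sum hterm
    _ = (q : ℤ) ^ (t + 2) - 2 := hsum
    _ < (q : ℤ) ^ (t + 2) - 1 := by omega
end
end
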